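/- arXiv:1301.5078 — 4 statements merged into one kernel-verified Lean document; each statement's English description precedes it below -/
import Mathlib

section
/- Let γ>1 and C>0, and let α : ℕ → ℂ satisfy |α_n| ≤ C·exp(−n^γ) for all n ≥ 1. Then for every z ∈ ℂ there exists exactly one bounded sequence F(z,·) = (F₁(z,·),F₂(z,·)) : ℕ₀ → ℂ² satisfying the Volterra-type Jost equations: for all k ≥ 0 the series Σ_{n=k+1}^∞ α_n ζ_n(z) F₂(z,n) and Σ_{n=k+1}^∞ z^{n−k−1} conj(α_n) ζ_{k+1}(z) F₁(z,n) converge absolutely and F₁(z,k) = 1 − Σ_{n=k+1}^∞ α_n ζ_n(z) F₂(z,n), F₂(z,k) = − Σ_{n=k+1}^∞ z^{n−k−1} conj(α_n) ζ_{k+1}(z) F₁(z,n). -/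
open Complex Filter
open scoped ComplexConjugate Topology

noncomputable section

def cmvZeta (n : ℕ) (z : ℂ) : ℂ := if Odd n then z else 1

def enorm2 (v : ℂ × ℂ) : ℝ := Real.sqrt (‖v.1‖ ^ 2 + ‖v.2‖ ^ 2)

def IsJostSolution (α : ℕ → ℂ) (F : ℂ → ℕ → ℂ × ℂ) : Prop :=
  (∀ z : ℂ, ∃ M : ℝ, ∀ k : ℕ, enorm2 (F z k) ≤ M) ∧
  ∀ (z : ℂ) (k : ℕ),
    Summable (fun n : ℕ => ‖α (k + 1 + n) * cmvZeta (k + 1 + n) z * (F z (k + 1 + n)).2‖) ∧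
    Summable (fun n : ℕ => ‖z ^ n * conj (α (k + 1 + n)) * cmvZeta (k + 1) z * (F z (k + 1 + n)).1‖) ∧
    (F z k).1 = 1 - ∑' n : ℕ, α (k + 1 + n) * cmvZeta (k + 1 + n) z * (F z (k + 1 + n)).2 ∧
    (F z k).2 = - ∑' n : ℕ, z ^ n * conj (α (k + 1 + n)) * cmvZeta (k + 1) z * (F z (k + 1 + n)).1

def SuperExpDecay (γ C : ℝ) (α : ℕ → ℂ) : Prop :=
  ∀ n : ℕ, 1 ≤ n → ‖α n‖ ≤ C * Real.exp (-(n : ℝ) ^ γ)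

def MemB0 (γ C Q : ℝ) (α : ℕ → ℂ) : Prop :=
  (∀ k : ℕ, 1 ≤ k → ‖α k‖ < 1) ∧
  SuperExpDecay γ C α ∧
  1 / Q ≤ ∏' j : ℕ, (1 - ‖α (j + 1)‖)

def jostPi (F : ℂ → ℕ → ℂ × ℂ) (z : ℂ) : ℂ := (F z 0).1 - (F z 0).2

def HasZeroOrder (f : ℂ → ℂ) (w : ℂ) (m : ℕ) : Prop :=
  ∃ g : ℂ → ℂ, AnalyticAt ℂ g w ∧ g w ≠ 0 ∧ ∀ᶠ x in 𝓝 w, f x = (x - w) ^ m * g x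

def CMVStep (α : ℕ → ℂ) (z : ℂ) (k : ℕ) (prev cur : ℂ × ℂ) : Prop :=
  if Odd k then
    cur.1 = (α k * prev.1 + z * prev.2) / ((Real.sqrt (1 - ‖α k‖ ^ 2) : ℝ) : ℂ) ∧
    cur.2 = (prev.1 / z + conj (α k) * prev.2) / ((Real.sqrt (1 - ‖α k‖ ^ 2) : ℝ) : ℂ)
  else
    cur.1 = (conj (α k) * prev.1 + prev.2) / ((Real.sqrt (1 - ‖α k‖ ^ 2) : ℝ) : ℂ) ∧
    cur.2 = (prev.1 + α k * prev.2) / ((Real.sqrt (1 - ‖α k‖ ^ 2) : ℝ) : ℂ)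

end

noncomputable section
namespace JostAux

variable (α : ℕ → ℂ) (z : ℂ)

def Mz (z : ℂ) : ℝ := max (‖z‖) 1

lemma one_le_Mz : 1 ≤ Mz z := le_max_right _ _
lemma abs_le_Mz : ‖z‖ ≤ Mz z := le_max_left _ _
lemma Mz_pos : 0 < Mz z := lt_of_lt_of_le one_pos (one_le_Mz z)

lemma abs_cmvZeta_le (n : ℕ) : ‖cmvZeta n z‖ ≤ Mz z := by
  unfold cmvZeta; split
  · exact abs_le_Mz z
  · simpa using one_le_Mz z

def bet (n : ℕ) : ℝ := ‖α n‖ * Mz z ^ n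

lemma bet_nonneg (n : ℕ) : 0 ≤ bet α z n :=
  mul_nonneg (norm_nonneg _) (pow_nonneg (Mz_pos z).le _)

lemma summable_bet {γ C : ℝ} (hγ : 1 < γ) (hC : 0 < C) (hα : SuperExpDecay γ C α) :
    Summable (bet α z) := by
  set M := Mz z with hM
  have hM1 : 1 ≤ M := one_le_Mz z
  set a : ℝ := 1 + Real.log M + |Real.log C| with ha
  obtain ⟨x₀, hx₀⟩ : ∃ x₀ : ℝ, ∀ x ≥ x₀, a ≤ x ^ (γ - 1) := by
    have := (tendsto_rpow_atTop (y := γ - 1) (by linarith)).eventually_ge_atTop a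
    rcases eventually_atTop.1 this with ⟨x₀, hx₀⟩
    exact ⟨x₀, fun x hx => hx₀ x hx⟩
  obtain ⟨n₀, hn₀1, hn₀x⟩ : ∃ n₀ : ℕ, 1 ≤ n₀ ∧ x₀ ≤ (n₀ : ℝ) := by
    obtain ⟨m, hm⟩ := exists_nat_ge x₀
    exact ⟨max 1 m, le_max_left _ _, hm.trans (by exact_mod_cast le_max_right 1 m)⟩
  rw [← summable_nat_add_iff n₀]
  have key : ∀ m : ℕ, bet α z (m + n₀) ≤ Real.exp (-1) ^ m := by
    intro m
    set n : ℕ := m + n₀ with hn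
    have hn1 : 1 ≤ n := le_trans hn₀1 (Nat.le_add_left _ _)
    have hnR : (1:ℝ) ≤ (n:ℝ) := by exact_mod_cast hn1
    have hax : a ≤ (n:ℝ) ^ (γ - 1) := by
      refine hx₀ _ (le_trans hn₀x ?_)
      exact_mod_cast Nat.le_add_left n₀ m
    have hpow : (n:ℝ) * a ≤ (n:ℝ) ^ γ := by
      have : (n:ℝ) ^ γ = (n:ℝ) * (n:ℝ) ^ (γ - 1) := by
        rw [← Real.rpow_one_add' (by linarith) (by ring_nf; linarith)]
        ring_nf
      rw [this]
      exact mul_le_mul_of_nonneg_left hax (by linarith)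
    have h1 : bet α z n ≤ C * Real.exp (-(n:ℝ) ^ γ) * M ^ n :=
      mul_le_mul_of_nonneg_right (hα n hn1) (pow_nonneg (by linarith) _)
    have hMpos : (0:ℝ) < M := by linarith
    have hMn : M ^ n = Real.exp ((n:ℝ) * Real.log M) := by
      rw [Real.exp_nat_mul, Real.exp_log hMpos]
    have h2 : C * Real.exp (-(n:ℝ) ^ γ) * M ^ n = Real.exp (Real.log C - (n:ℝ) ^ γ + n * Real.log M) := by
      conv_lhs => rw [hMn, ← Real.exp_log hC]
      rw [← Real.exp_add, ← Real.exp_add]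
      ring_nf
    have h3 : Real.log C - (n:ℝ) ^ γ + n * Real.log M ≤ -(n:ℝ) := by
      have hlogM : 0 ≤ Real.log M := Real.log_nonneg hM1
      have h4 : Real.log C ≤ |Real.log C| := le_abs_self _
      have h5 : (n:ℝ) * a = (n:ℝ) + (n:ℝ) * Real.log M + (n:ℝ) * |Real.log C| := by
        rw [ha]; ring
      nlinarith [hpow, mul_le_mul_of_nonneg_left (le_abs_self (Real.log C)) (by linarith : (0:ℝ) ≤ (n:ℝ)), abs_nonneg (Real.log C)]
    have h6 : Real.exp (-1) ^ m = Real.exp (-(m:ℝ)) := by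
      rw [← Real.exp_nat_mul]; ring_nf
    calc bet α z n ≤ Real.exp (Real.log C - (n:ℝ) ^ γ + n * Real.log M) := h2 ▸ h1
      _ ≤ Real.exp (-(n:ℝ)) := Real.exp_le_exp.2 h3
      _ ≤ Real.exp (-(m:ℝ)) := by
          apply Real.exp_le_exp.2; push_cast [hn]; linarith [Nat.cast_nonneg (α := ℝ) n₀]
      _ = Real.exp (-1) ^ m := h6.symm
  exact Summable.of_nonneg_of_le (fun m => bet_nonneg α z _) key
    (summable_geometric_of_lt_one (Real.exp_pos _).le (by
      rw [Real.exp_lt_one_iff]; norm_num))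


def Bt (k : ℕ) : ℝ := ∑' n : ℕ, bet α z (k + 1 + n)

lemma summable_tail (hb : Summable (bet α z)) (k : ℕ) : Summable (fun n : ℕ => bet α z (k + 1 + n)) := by
  have : (fun n : ℕ => bet α z (k + 1 + n)) = fun n : ℕ => bet α z (n + (k + 1)) := by
    funext n; congr 1; omega
  rw [this, summable_nat_add_iff]; exact hb

lemma Bt_nonneg (k : ℕ) : 0 ≤ Bt α z k :=
  tsum_nonneg fun n => bet_nonneg α z _

lemma Bt_succ (hb : Summable (bet α z)) (k : ℕ) :
    Bt α z k = bet α z (k + 1) + Bt α z (k + 1) := by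
  unfold Bt
  rw [Summable.tsum_eq_zero_add (summable_tail α z hb k)]
  congr 1
  apply tsum_congr; intro n; congr 1; omega

lemma Bt_anti (hb : Summable (bet α z)) : Antitone (Bt α z) := by
  apply antitone_nat_of_succ_le
  intro k
  rw [Bt_succ α z hb k]
  linarith [bet_nonneg α z (k + 1)]

lemma Bt_tendsto : Tendsto (Bt α z) atTop (𝓝 0) := by
  have h1 : Bt α z = (fun i : ℕ => ∑' n : ℕ, bet α z (n + i)) ∘ (fun k => k + 1) := by
    funext k
    simp only [Function.comp_apply]
    apply tsum_congr; intro n; congr 1; omega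
  rw [h1]
  exact (tendsto_sum_nat_add (bet α z)).comp (tendsto_add_atTop_nat 1)

def wt (k : ℕ) : ℝ := Real.exp (2 * Bt α z k)

lemma one_le_wt (k : ℕ) : 1 ≤ wt α z k :=
  Real.one_le_exp (by linarith [Bt_nonneg α z k])

lemma wt_pos (k : ℕ) : 0 < wt α z k := Real.exp_pos _

lemma wt_anti (hb : Summable (bet α z)) : Antitone (wt α z) := fun i j hij =>
  Real.exp_le_exp.2 (by linarith [Bt_anti α z hb hij])

lemma wt_key (hb : Summable (bet α z)) (k : ℕ) : bet α z (k + 1) * wt α z (k + 1) ≤ (wt α z k - wt α z (k + 1)) / 2 := by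
  have h1 : wt α z k = Real.exp (2 * bet α z (k + 1)) * wt α z (k + 1) := by
    unfold wt
    rw [← Real.exp_add, Bt_succ α z hb k]; ring_nf
  have h2 : 1 + 2 * bet α z (k + 1) ≤ Real.exp (2 * bet α z (k + 1)) := by
    have := Real.add_one_le_exp (2 * bet α z (k + 1)); linarith
  have h3 := wt_pos α z (k + 1)
  nlinarith [mul_le_mul_of_nonneg_right h2 h3.le]

lemma wt_tendsto : Tendsto (wt α z) atTop (𝓝 1) := by
  have : Tendsto (fun k => 2 * Bt α z k) atTop (𝓝 (2 * 0)) :=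
    (Bt_tendsto α z).const_mul 2
  exact (by simpa using (Real.continuous_exp.tendsto (2 * 0)).comp (by simpa using this) : Tendsto (Real.exp ∘ fun k => 2 * Bt α z k) atTop (𝓝 1))

lemma summable_bw (hb : Summable (bet α z)) (k : ℕ) :
    Summable (fun n : ℕ => bet α z (k + 1 + n) * wt α z (k + 1 + n)) := by
  apply Summable.of_nonneg_of_le
    (fun n => mul_nonneg (bet_nonneg α z _) (wt_pos α z _).le)
    (fun n => ?_) ((summable_tail α z hb k).mul_right (wt α z 0))
  exact mul_le_mul_of_nonneg_left (wt_anti α z hb (Nat.zero_le _)) (bet_nonneg α z _)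

lemma tsum_bw_le (hb : Summable (bet α z)) (k : ℕ) :
    ∑' n : ℕ, bet α z (k + 1 + n) * wt α z (k + 1 + n) ≤ wt α z k / 2 := by
  apply Real.tsum_le_of_sum_range_le
    (fun n => mul_nonneg (bet_nonneg α z _) (wt_pos α z _).le)
  intro m
  have step : ∀ n, bet α z (k + 1 + n) * wt α z (k + 1 + n)
      ≤ (wt α z (k + n) - wt α z (k + n + 1)) / 2 := by
    intro n
    have h := wt_key α z hb (k + n)
    have e : k + 1 + n = k + n + 1 := by omega
    rw [e]; exact h
  have tel : ∀ m : ℕ, ∑ n ∈ Finset.range m, (wt α z (k + n) - wt α z (k + n + 1))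
      = wt α z k - wt α z (k + m) := by
    intro m
    induction m with
    | zero => simp
    | succ m ih =>
        rw [Finset.sum_range_succ, ih]
        have e : k + (m + 1) = k + m + 1 := by omega
        rw [e]; ring
  calc ∑ n ∈ Finset.range m, bet α z (k + 1 + n) * wt α z (k + 1 + n)
      ≤ ∑ n ∈ Finset.range m, (wt α z (k + n) - wt α z (k + n + 1)) / 2 :=
        Finset.sum_le_sum fun n _ => step n
    _ = (∑ n ∈ Finset.range m, (wt α z (k + n) - wt α z (k + n + 1))) / 2 := by
        rw [Finset.sum_div]
    _ = (wt α z k - wt α z (k + m)) / 2 := by rw [tel]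
    _ ≤ wt α z k / 2 := by
        have := one_le_wt α z (k + m)
        linarith



lemma norm_le_enorm2 (v : ℂ × ℂ) : ‖v‖ ≤ enorm2 v := by
  rw [Prod.norm_def, enorm2]
  have h1 : ‖v.1‖ ≤ Real.sqrt (‖v.1‖ ^ 2 + ‖v.2‖ ^ 2) := by
    refine le_trans ?_ (Real.sqrt_le_sqrt (by nlinarith [norm_nonneg v.2] :
      ‖v.1‖ ^ 2 ≤ ‖v.1‖ ^ 2 + ‖v.2‖ ^ 2))
    rw [Real.sqrt_sq (norm_nonneg _)]
  have h2 : ‖v.2‖ ≤ Real.sqrt (‖v.1‖ ^ 2 + ‖v.2‖ ^ 2) := by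
    refine le_trans ?_ (Real.sqrt_le_sqrt (by nlinarith [norm_nonneg v.1] :
      ‖v.2‖ ^ 2 ≤ ‖v.1‖ ^ 2 + ‖v.2‖ ^ 2))
    rw [Real.sqrt_sq (norm_nonneg _)]
  exact max_le h1 h2

lemma enorm2_le (v : ℂ × ℂ) : enorm2 v ≤ 2 * ‖v‖ := by
  rw [Prod.norm_def, enorm2]
  have h1 : ‖v.1‖ ≤ max ‖v.1‖ ‖v.2‖ := by
    exact le_max_left _ _
  have h2 : ‖v.2‖ ≤ max ‖v.1‖ ‖v.2‖ := by
    exact le_max_right _ _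
  have h0 : (0:ℝ) ≤ max ‖v.1‖ ‖v.2‖ := le_trans (norm_nonneg _) (le_max_left _ _)
  have : ‖v.1‖ ^ 2 + ‖v.2‖ ^ 2 ≤ (2 * max ‖v.1‖ ‖v.2‖) ^ 2 := by
    nlinarith [norm_nonneg v.1, norm_nonneg v.2]
  calc Real.sqrt (‖v.1‖ ^ 2 + ‖v.2‖ ^ 2)
      ≤ Real.sqrt ((2 * max ‖v.1‖ ‖v.2‖) ^ 2) := Real.sqrt_le_sqrt this
    _ = 2 * max ‖v.1‖ ‖v.2‖ := Real.sqrt_sq (by linarith)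

def KA (k n : ℕ) : ℂ := α (k + 1 + n) * cmvZeta (k + 1 + n) z

def KB (k n : ℕ) : ℂ := z ^ n * conj (α (k + 1 + n)) * cmvZeta (k + 1) z

lemma abs_KA_le (k n : ℕ) : ‖KA α z k n‖ ≤ bet α z (k + 1 + n) := by
  unfold KA bet
  rw [norm_mul]
  calc ‖α (k + 1 + n)‖ * ‖cmvZeta (k + 1 + n) z‖
      ≤ ‖α (k + 1 + n)‖ * Mz z :=
        mul_le_mul_of_nonneg_left (abs_cmvZeta_le z _) (norm_nonneg _)
    _ ≤ ‖α (k + 1 + n)‖ * Mz z ^ (k + 1 + n) :=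
        mul_le_mul_of_nonneg_left
          (le_self_pow₀ (one_le_Mz z) (by omega)) (norm_nonneg _)

lemma abs_KB_le (k n : ℕ) : ‖KB α z k n‖ ≤ bet α z (k + 1 + n) := by
  unfold KB bet
  rw [norm_mul, norm_mul, norm_pow, Complex.norm_conj]
  have h1 : ‖z‖ ^ n ≤ Mz z ^ n :=
    pow_le_pow_left₀ (norm_nonneg z) (abs_le_Mz z) n
  have h2 : ‖cmvZeta (k + 1) z‖ ≤ Mz z := abs_cmvZeta_le z _
  have h3 : Mz z ^ n * Mz z ≤ Mz z ^ (k + 1 + n) := by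
    rw [← pow_succ]
    exact pow_le_pow_right₀ (one_le_Mz z) (by omega)
  calc ‖z‖ ^ n * ‖α (k + 1 + n)‖ * ‖cmvZeta (k + 1) z‖
      ≤ Mz z ^ n * ‖α (k + 1 + n)‖ * Mz z := by
        apply mul_le_mul
        · exact mul_le_mul_of_nonneg_right h1 (norm_nonneg _)
        · exact h2
        · exact norm_nonneg _
        · exact mul_nonneg (pow_nonneg (Mz_pos z).le n) (norm_nonneg _)
    _ = ‖α (k + 1 + n)‖ * (Mz z ^ n * Mz z) := by ring
    _ ≤ ‖α (k + 1 + n)‖ * Mz z ^ (k + 1 + n) :=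
        mul_le_mul_of_nonneg_left h3 (norm_nonneg _)

lemma tsum_ker_bound (k : ℕ) (κ φ : ℕ → ℂ) (ψ : ℕ → ℝ)
    (hκ : ∀ n, ‖κ n‖ ≤ bet α z (k + 1 + n))
    (hφ : ∀ n, ‖φ n‖ ≤ ψ n)
    (hψ : Summable (fun n => bet α z (k + 1 + n) * ψ n)) :
    Summable (fun n : ℕ => ‖κ n * φ n‖) ∧
    Summable (fun n : ℕ => κ n * φ n) ∧
    ‖∑' n : ℕ, κ n * φ n‖ ≤ ∑' n : ℕ, bet α z (k + 1 + n) * ψ n := by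
  have hle : ∀ n, ‖κ n * φ n‖ ≤ bet α z (k + 1 + n) * ψ n := by
    intro n
    rw [norm_mul]
    exact mul_le_mul (hκ n) (hφ n) (norm_nonneg _)
      (le_trans (norm_nonneg _) (hκ n))
  have habs : Summable (fun n : ℕ => ‖κ n * φ n‖) :=
    Summable.of_nonneg_of_le (fun n => norm_nonneg _) hle hψ
  have hnorm : Summable (fun n : ℕ => ‖κ n * φ n‖) := by
    exact habs
  have hsum : Summable (fun n : ℕ => κ n * φ n) := hnorm.of_norm
  refine ⟨habs, hsum, ?_⟩
  calc ‖∑' n : ℕ, κ n * φ n‖ ≤ ∑' n : ℕ, ‖κ n * φ n‖ := norm_tsum_le_tsum_norm hnorm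
    _ ≤ ∑' n : ℕ, bet α z (k + 1 + n) * ψ n := by
        refine Summable.tsum_le_tsum (fun n => ?_) hnorm hψ
        exact hle n


def SolEq (G : ℕ → ℂ × ℂ) : Prop :=
  ∀ k : ℕ,
    Summable (fun n : ℕ => ‖α (k + 1 + n) * cmvZeta (k + 1 + n) z * (G (k + 1 + n)).2‖) ∧
    Summable (fun n : ℕ => ‖z ^ n * conj (α (k + 1 + n)) * cmvZeta (k + 1) z * (G (k + 1 + n)).1‖) ∧
    (G k).1 = 1 - ∑' n : ℕ, α (k + 1 + n) * cmvZeta (k + 1 + n) z * (G (k + 1 + n)).2 ∧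
    (G k).2 = - ∑' n : ℕ, z ^ n * conj (α (k + 1 + n)) * cmvZeta (k + 1) z * (G (k + 1 + n)).1

lemma diff_le (hb : Summable (bet α z)) (G G' : ℕ → ℂ × ℂ) (c : ℝ)
    (hc : ∀ j, ‖G j - G' j‖ ≤ c)
    (hG : SolEq α z G) (hG' : SolEq α z G') (k : ℕ) :
    ‖G k - G' k‖ ≤ ∑' n : ℕ, bet α z (k + 1 + n) * ‖G (k + 1 + n) - G' (k + 1 + n)‖ := by
  have hψ0 : ∀ n : ℕ, (0:ℝ) ≤ ‖G (k + 1 + n) - G' (k + 1 + n)‖ := fun n => norm_nonneg _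
  have hψsum : Summable (fun n : ℕ => bet α z (k + 1 + n) * ‖G (k + 1 + n) - G' (k + 1 + n)‖) :=
    Summable.of_nonneg_of_le (fun n => mul_nonneg (bet_nonneg α z _) (hψ0 n))
      (fun n => mul_le_mul_of_nonneg_left (hc _) (bet_nonneg α z _))
      ((summable_tail α z hb k).mul_right c)
  obtain ⟨hS1, hS2, hE1, hE2⟩ := hG k
  obtain ⟨hS1', hS2', hE1', hE2'⟩ := hG' k
  set κ1 : ℕ → ℂ := fun n => α (k + 1 + n) * cmvZeta (k + 1 + n) z with hκ1
  set κ2 : ℕ → ℂ := fun n => z ^ n * conj (α (k + 1 + n)) * cmvZeta (k + 1) z with hκ2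
  have hκA : ∀ n, ‖κ1 n‖ ≤ bet α z (k + 1 + n) := fun n => abs_KA_le α z k n
  have hκB : ∀ n, ‖κ2 n‖ ≤ bet α z (k + 1 + n) := fun n => abs_KB_le α z k n
  have t1 : Summable (fun n : ℕ => κ1 n * (G (k + 1 + n)).2) := by
    apply Summable.of_norm; exact hS1
  have t1' : Summable (fun n : ℕ => κ1 n * (G' (k + 1 + n)).2) := by
    apply Summable.of_norm; exact hS1'
  have t2 : Summable (fun n : ℕ => κ2 n * (G (k + 1 + n)).1) := by
    apply Summable.of_norm; exact hS2
  have t2' : Summable (fun n : ℕ => κ2 n * (G' (k + 1 + n)).1) := by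
    apply Summable.of_norm; exact hS2'
  have hsub1 : (G k).1 - (G' k).1
      = ∑' n : ℕ, κ1 n * ((G' (k + 1 + n)).2 - (G (k + 1 + n)).2) := by
    have e : (fun n : ℕ => κ1 n * ((G' (k + 1 + n)).2 - (G (k + 1 + n)).2))
        = fun n : ℕ => κ1 n * (G' (k + 1 + n)).2 - κ1 n * (G (k + 1 + n)).2 := by
      funext n; ring
    rw [hE1, hE1', e, Summable.tsum_sub t1' t1]
    ring
  have hsub2 : (G k).2 - (G' k).2
      = ∑' n : ℕ, κ2 n * ((G' (k + 1 + n)).1 - (G (k + 1 + n)).1) := by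
    have e : (fun n : ℕ => κ2 n * ((G' (k + 1 + n)).1 - (G (k + 1 + n)).1))
        = fun n : ℕ => κ2 n * (G' (k + 1 + n)).1 - κ2 n * (G (k + 1 + n)).1 := by
      funext n; ring
    rw [hE2, hE2', e, Summable.tsum_sub t2' t2]
    ring
  have hφ1 : ∀ n, ‖(G' (k + 1 + n)).2 - (G (k + 1 + n)).2‖
      ≤ ‖G (k + 1 + n) - G' (k + 1 + n)‖ := by
    intro n
    rw [← Prod.snd_sub, norm_sub_rev (G (k+1+n)) (G' (k+1+n))]
    exact norm_snd_le _
  have hφ2 : ∀ n, ‖(G' (k + 1 + n)).1 - (G (k + 1 + n)).1‖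
      ≤ ‖G (k + 1 + n) - G' (k + 1 + n)‖ := by
    intro n
    rw [← Prod.fst_sub, norm_sub_rev (G (k+1+n)) (G' (k+1+n))]
    exact norm_fst_le _
  have bound1 := (tsum_ker_bound α z k κ1 _ _ hκA hφ1 hψsum).2.2
  have bound2 := (tsum_ker_bound α z k κ2 _ _ hκB hφ2 hψsum).2.2
  rw [Prod.norm_def]
  apply max_le
  · rw [Prod.fst_sub, hsub1]; exact bound1
  · rw [Prod.snd_sub, hsub2]; exact bound2

lemma sol_unique (hb : Summable (bet α z)) (G G' : ℕ → ℂ × ℂ)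
    (hGb : ∃ M : ℝ, ∀ k, enorm2 (G k) ≤ M) (hG : SolEq α z G)
    (hG'b : ∃ M : ℝ, ∀ k, enorm2 (G' k) ≤ M) (hG' : SolEq α z G') : G = G' := by
  obtain ⟨M1, hM1⟩ := hGb
  obtain ⟨M2, hM2⟩ := hG'b
  have hc : ∀ j, ‖G j - G' j‖ ≤ M1 + M2 := by
    intro j
    calc ‖G j - G' j‖ ≤ ‖G j‖ + ‖G' j‖ := norm_sub_le _ _
      _ ≤ enorm2 (G j) + enorm2 (G' j) := add_le_add (norm_le_enorm2 _) (norm_le_enorm2 _)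
      _ ≤ M1 + M2 := add_le_add (hM1 j) (hM2 j)
  set c : ℝ := M1 + M2 with hcdef
  have hc0 : (0:ℝ) ≤ c := le_trans (norm_nonneg _) (hc 0)
  have key := diff_le α z hb G G' c hc hG hG'
  have claim : ∀ m k, ‖G k - G' k‖ ≤ c * Bt α z k ^ m := by
    intro m
    induction m with
    | zero => intro k; simpa using hc k
    | succ m ih =>
        intro k
        have hψsum : Summable
            (fun n : ℕ => bet α z (k + 1 + n) * ‖G (k + 1 + n) - G' (k + 1 + n)‖) :=
          Summable.of_nonneg_of_le
            (fun n => mul_nonneg (bet_nonneg α z _) (norm_nonneg _))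
            (fun n => mul_le_mul_of_nonneg_left (hc _) (bet_nonneg α z _))
            ((summable_tail α z hb k).mul_right c)
        have hterm : ∀ n : ℕ, bet α z (k + 1 + n) * ‖G (k + 1 + n) - G' (k + 1 + n)‖
            ≤ bet α z (k + 1 + n) * (c * Bt α z k ^ m) := by
          intro n
          apply mul_le_mul_of_nonneg_left _ (bet_nonneg α z _)
          calc ‖G (k + 1 + n) - G' (k + 1 + n)‖ ≤ c * Bt α z (k + 1 + n) ^ m := ih _
            _ ≤ c * Bt α z k ^ m := by
                apply mul_le_mul_of_nonneg_left _ hc0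
                exact pow_le_pow_left₀ (Bt_nonneg α z _) (Bt_anti α z hb (by omega)) m
        calc ‖G k - G' k‖
            ≤ ∑' n : ℕ, bet α z (k + 1 + n) * ‖G (k + 1 + n) - G' (k + 1 + n)‖ := key k
          _ ≤ ∑' n : ℕ, bet α z (k + 1 + n) * (c * Bt α z k ^ m) :=
              Summable.tsum_le_tsum hterm hψsum ((summable_tail α z hb k).mul_right _)
          _ = Bt α z k * (c * Bt α z k ^ m) := tsum_mul_right
          _ = c * Bt α z k ^ (m + 1) := by ring
  obtain ⟨N, hN⟩ : ∃ N : ℕ, Bt α z N < 1 := by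
    have h : ∀ᶠ k in atTop, Bt α z k < 1 :=
      (Bt_tendsto α z).eventually (gt_mem_nhds one_pos)
    rcases eventually_atTop.1 h with ⟨N, hN⟩
    exact ⟨N, hN N le_rfl⟩
  have tail0 : ∀ k, N ≤ k → ‖G k - G' k‖ = 0 := by
    intro k hk
    have hBk : Bt α z k ≤ Bt α z N := Bt_anti α z hb hk
    have hlim : Tendsto (fun m : ℕ => c * Bt α z N ^ m) atTop (𝓝 (c * 0)) :=
      (tendsto_pow_atTop_nhds_zero_of_lt_one (Bt_nonneg α z N) hN).const_mul c
    have hle : ‖G k - G' k‖ ≤ c * 0 := by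
      refine ge_of_tendsto' hlim fun m => ?_
      calc ‖G k - G' k‖ ≤ c * Bt α z k ^ m := claim m k
        _ ≤ c * Bt α z N ^ m :=
          mul_le_mul_of_nonneg_left (pow_le_pow_left₀ (Bt_nonneg α z _) hBk m) hc0
    exact le_antisymm (by simpa using hle) (norm_nonneg _)
  have all0 : ∀ d k, N ≤ k + d → ‖G k - G' k‖ = 0 := by
    intro d
    induction d with
    | zero => intro k hk; exact tail0 k (by omega)
    | succ d ih =>
        intro k hk
        have hz : ∀ n : ℕ, ‖G (k + 1 + n) - G' (k + 1 + n)‖ = 0 :=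
          fun n => ih (k + 1 + n) (by omega)
        have h1 : ‖G k - G' k‖ ≤ 0 := by simpa [hz] using key k
        exact le_antisymm h1 (norm_nonneg _)
  funext k
  exact sub_eq_zero.mp (norm_eq_zero.mp (all0 N k (by omega)))


def TG (G : ℕ → ℂ × ℂ) (k : ℕ) : ℂ × ℂ :=
  (1 - ∑' n : ℕ, KA α z k n * (G (k + 1 + n)).2,
   - ∑' n : ℕ, KB α z k n * (G (k + 1 + n)).1)

lemma tsum_ker_wt_bound (hb : Summable (bet α z)) (k : ℕ) (κ φ : ℕ → ℂ) (c : ℝ) (hc : 0 ≤ c)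
    (hκ : ∀ n, ‖κ n‖ ≤ bet α z (k + 1 + n))
    (hφ : ∀ n, ‖φ n‖ ≤ wt α z (k + 1 + n) * c) :
    Summable (fun n : ℕ => ‖κ n * φ n‖) ∧
    Summable (fun n : ℕ => κ n * φ n) ∧
    ‖∑' n : ℕ, κ n * φ n‖ ≤ wt α z k / 2 * c := by
  have hψ : Summable (fun n : ℕ => bet α z (k + 1 + n) * (wt α z (k + 1 + n) * c)) := by
    have := (summable_bw α z hb k).mul_right c
    simpa [mul_assoc] using this
  obtain ⟨h1, h2, h3⟩ := tsum_ker_bound α z k κ φ _ hκ hφ hψ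
  refine ⟨h1, h2, h3.trans ?_⟩
  calc ∑' n : ℕ, bet α z (k + 1 + n) * (wt α z (k + 1 + n) * c)
      = (∑' n : ℕ, bet α z (k + 1 + n) * wt α z (k + 1 + n)) * c := by
        rw [← tsum_mul_right]
        apply tsum_congr; intro n; ring
    _ ≤ wt α z k / 2 * c := mul_le_mul_of_nonneg_right (tsum_bw_le α z hb k) hc

lemma sol_exists (hb : Summable (bet α z)) :
    ∃ G : ℕ → ℂ × ℂ, (∃ M : ℝ, ∀ k, enorm2 (G k) ≤ M) ∧ SolEq α z G := by
  classical
  have hwpos := wt_pos α z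
  have hw1 := one_le_wt α z
  -- weighted version of a bounded function
  let GH : BoundedContinuousFunction ℕ (ℂ × ℂ) → ℕ → ℂ × ℂ :=
    fun H j => wt α z j • H j
  have habs2 : ∀ (H : BoundedContinuousFunction ℕ (ℂ × ℂ)) (k n : ℕ),
      ‖(GH H (k + 1 + n)).2‖ ≤ wt α z (k + 1 + n) * ‖H‖ := by
    intro H k n
    show ‖(wt α z (k + 1 + n) • H (k + 1 + n)).2‖ ≤ _
    rw [Prod.smul_snd, norm_smul, Real.norm_eq_abs,
      abs_of_pos (hwpos _)]
    exact mul_le_mul_of_nonneg_left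
      (le_trans (norm_snd_le _) (H.norm_coe_le_norm _)) (hwpos _).le
  have habs1 : ∀ (H : BoundedContinuousFunction ℕ (ℂ × ℂ)) (k n : ℕ),
      ‖(GH H (k + 1 + n)).1‖ ≤ wt α z (k + 1 + n) * ‖H‖ := by
    intro H k n
    show ‖(wt α z (k + 1 + n) • H (k + 1 + n)).1‖ ≤ _
    rw [Prod.smul_fst, norm_smul, Real.norm_eq_abs,
      abs_of_pos (hwpos _)]
    exact mul_le_mul_of_nonneg_left
      (le_trans (norm_fst_le _) (H.norm_coe_le_norm _)) (hwpos _).le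
  have hbnd : ∀ (H : BoundedContinuousFunction ℕ (ℂ × ℂ)) (k : ℕ),
      ‖(wt α z k)⁻¹ • TG α z (GH H) k‖ ≤ 1 + ‖H‖ := by
    intro H k
    have hA := tsum_ker_wt_bound α z hb k (KA α z k) (fun n => (GH H (k + 1 + n)).2)
      ‖H‖ (norm_nonneg H) (fun n => abs_KA_le α z k n) (habs2 H k)
    have hB := tsum_ker_wt_bound α z hb k (KB α z k) (fun n => (GH H (k + 1 + n)).1)
      ‖H‖ (norm_nonneg H) (fun n => abs_KB_le α z k n) (habs1 H k)
    rw [norm_smul, Real.norm_eq_abs, abs_of_pos (inv_pos.2 (hwpos k))]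
    have hTG : ‖TG α z (GH H) k‖ ≤ 1 + wt α z k / 2 * ‖H‖ := by
      rw [Prod.norm_def]
      apply max_le
      · calc ‖(TG α z (GH H) k).1‖
            = ‖(1 : ℂ) - ∑' n : ℕ, KA α z k n * (GH H (k + 1 + n)).2‖ := rfl
          _ ≤ ‖(1 : ℂ)‖ + ‖∑' n : ℕ, KA α z k n * (GH H (k + 1 + n)).2‖ := norm_sub_le _ _
          _ ≤ 1 + wt α z k / 2 * ‖H‖ := by
              rw [norm_one]; exact add_le_add_right hA.2.2 1
      · calc ‖(TG α z (GH H) k).2‖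
            = ‖∑' n : ℕ, KB α z k n * (GH H (k + 1 + n)).1‖ := norm_neg _
          _ ≤ wt α z k / 2 * ‖H‖ := hB.2.2
          _ ≤ 1 + wt α z k / 2 * ‖H‖ := by
              have : (0:ℝ) ≤ wt α z k / 2 * ‖H‖ :=
                mul_nonneg (by linarith [hwpos k]) (norm_nonneg _)
              linarith
    have hinv : (wt α z k)⁻¹ ≤ 1 := inv_le_one_of_one_le₀ (hw1 k)
    have hne : wt α z k ≠ 0 := (hwpos k).ne'
    calc (wt α z k)⁻¹ * ‖TG α z (GH H) k‖
        ≤ (wt α z k)⁻¹ * (1 + wt α z k / 2 * ‖H‖) :=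
          mul_le_mul_of_nonneg_left hTG (inv_pos.2 (hwpos k)).le
      _ = (wt α z k)⁻¹ + ‖H‖ / 2 := by field_simp
      _ ≤ 1 + ‖H‖ := by
          have : ‖H‖ / 2 ≤ ‖H‖ := by linarith [norm_nonneg H]
          linarith
  let Φ : BoundedContinuousFunction ℕ (ℂ × ℂ) → BoundedContinuousFunction ℕ (ℂ × ℂ) :=
    fun H => BoundedContinuousFunction.ofNormedAddCommGroupDiscrete
      (fun k => (wt α z k)⁻¹ • TG α z (GH H) k) (1 + ‖H‖) (hbnd H)
  have hΦapp : ∀ (H : BoundedContinuousFunction ℕ (ℂ × ℂ)) (k : ℕ),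
      Φ H k = (wt α z k)⁻¹ • TG α z (GH H) k := fun H k => rfl
  -- contraction
  have hlip : ∀ H H' : BoundedContinuousFunction ℕ (ℂ × ℂ),
      dist (Φ H) (Φ H') ≤ (1/2 : ℝ) * dist H H' := by
    intro H H'
    have hd0 : (0:ℝ) ≤ (1/2 : ℝ) * dist H H' := by positivity
    rw [BoundedContinuousFunction.dist_le hd0]
    intro k
    -- summabilities
    have hA := tsum_ker_wt_bound α z hb k (KA α z k) (fun n => (GH H (k + 1 + n)).2)
      ‖H‖ (norm_nonneg H) (fun n => abs_KA_le α z k n) (habs2 H k)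
    have hA' := tsum_ker_wt_bound α z hb k (KA α z k) (fun n => (GH H' (k + 1 + n)).2)
      ‖H'‖ (norm_nonneg H') (fun n => abs_KA_le α z k n) (habs2 H' k)
    have hB := tsum_ker_wt_bound α z hb k (KB α z k) (fun n => (GH H (k + 1 + n)).1)
      ‖H‖ (norm_nonneg H) (fun n => abs_KB_le α z k n) (habs1 H k)
    have hB' := tsum_ker_wt_bound α z hb k (KB α z k) (fun n => (GH H' (k + 1 + n)).1)
      ‖H'‖ (norm_nonneg H') (fun n => abs_KB_le α z k n) (habs1 H' k)
    have hφd2 : ∀ n : ℕ, ‖(GH H (k + 1 + n)).2 - (GH H' (k + 1 + n)).2‖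
        ≤ wt α z (k + 1 + n) * dist H H' := by
      intro n
      have e : (GH H (k + 1 + n)).2 - (GH H' (k + 1 + n)).2
          = wt α z (k + 1 + n) • ((H (k + 1 + n)).2 - (H' (k + 1 + n)).2) := by
        show (wt α z (k+1+n) • H (k+1+n)).2 - (wt α z (k+1+n) • H' (k+1+n)).2 = _
        rw [Prod.smul_snd, Prod.smul_snd, smul_sub]
      rw [e, norm_smul, Real.norm_eq_abs, abs_of_pos (hwpos _)]
      apply mul_le_mul_of_nonneg_left _ (hwpos _).le
      calc ‖(H (k+1+n)).2 - (H' (k+1+n)).2‖ = ‖(H (k+1+n) - H' (k+1+n)).2‖ := by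
            rw [Prod.snd_sub]
        _ ≤ ‖H (k+1+n) - H' (k+1+n)‖ := norm_snd_le _
        _ = dist (H (k+1+n)) (H' (k+1+n)) := (dist_eq_norm _ _).symm
        _ ≤ dist H H' := BoundedContinuousFunction.dist_coe_le_dist _
    have hφd1 : ∀ n : ℕ, ‖(GH H (k + 1 + n)).1 - (GH H' (k + 1 + n)).1‖
        ≤ wt α z (k + 1 + n) * dist H H' := by
      intro n
      have e : (GH H (k + 1 + n)).1 - (GH H' (k + 1 + n)).1
          = wt α z (k + 1 + n) • ((H (k + 1 + n)).1 - (H' (k + 1 + n)).1) := by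
        show (wt α z (k+1+n) • H (k+1+n)).1 - (wt α z (k+1+n) • H' (k+1+n)).1 = _
        rw [Prod.smul_fst, Prod.smul_fst, smul_sub]
      rw [e, norm_smul, Real.norm_eq_abs, abs_of_pos (hwpos _)]
      apply mul_le_mul_of_nonneg_left _ (hwpos _).le
      calc ‖(H (k+1+n)).1 - (H' (k+1+n)).1‖ = ‖(H (k+1+n) - H' (k+1+n)).1‖ := by
            rw [Prod.fst_sub]
        _ ≤ ‖H (k+1+n) - H' (k+1+n)‖ := norm_fst_le _
        _ = dist (H (k+1+n)) (H' (k+1+n)) := (dist_eq_norm _ _).symm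
        _ ≤ dist H H' := BoundedContinuousFunction.dist_coe_le_dist _
    have hdA := tsum_ker_wt_bound α z hb k (KA α z k)
      (fun n => (GH H (k + 1 + n)).2 - (GH H' (k + 1 + n)).2)
      (dist H H') dist_nonneg (fun n => abs_KA_le α z k n) hφd2
    have hdB := tsum_ker_wt_bound α z hb k (KB α z k)
      (fun n => (GH H (k + 1 + n)).1 - (GH H' (k + 1 + n)).1)
      (dist H H') dist_nonneg (fun n => abs_KB_le α z k n) hφd1
    have hdiff1 : (TG α z (GH H) k).1 - (TG α z (GH H') k).1
        = - ∑' n : ℕ, KA α z k n * ((GH H (k + 1 + n)).2 - (GH H' (k + 1 + n)).2) := by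
      have e : (fun n : ℕ => KA α z k n * ((GH H (k + 1 + n)).2 - (GH H' (k + 1 + n)).2))
          = fun n : ℕ => KA α z k n * (GH H (k + 1 + n)).2
            - KA α z k n * (GH H' (k + 1 + n)).2 := by
        funext n; ring
      show (1 - ∑' n : ℕ, KA α z k n * (GH H (k + 1 + n)).2)
          - (1 - ∑' n : ℕ, KA α z k n * (GH H' (k + 1 + n)).2) = _
      rw [e, Summable.tsum_sub hA.2.1 hA'.2.1]
      ring
    have hdiff2 : (TG α z (GH H) k).2 - (TG α z (GH H') k).2
        = - ∑' n : ℕ, KB α z k n * ((GH H (k + 1 + n)).1 - (GH H' (k + 1 + n)).1) := by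
      have e : (fun n : ℕ => KB α z k n * ((GH H (k + 1 + n)).1 - (GH H' (k + 1 + n)).1))
          = fun n : ℕ => KB α z k n * (GH H (k + 1 + n)).1
            - KB α z k n * (GH H' (k + 1 + n)).1 := by
        funext n; ring
      show (- ∑' n : ℕ, KB α z k n * (GH H (k + 1 + n)).1)
          - (- ∑' n : ℕ, KB α z k n * (GH H' (k + 1 + n)).1) = _
      rw [e, Summable.tsum_sub hB.2.1 hB'.2.1]
      ring
    have hTGd : ‖TG α z (GH H) k - TG α z (GH H') k‖ ≤ wt α z k / 2 * dist H H' := by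
      rw [Prod.norm_def]
      apply max_le
      · rw [Prod.fst_sub, hdiff1, norm_neg]; exact hdA.2.2
      · rw [Prod.snd_sub, hdiff2, norm_neg]; exact hdB.2.2
    calc dist (Φ H k) (Φ H' k)
        = ‖(wt α z k)⁻¹ • TG α z (GH H) k - (wt α z k)⁻¹ • TG α z (GH H') k‖ := by
          rw [dist_eq_norm, hΦapp, hΦapp]
      _ = (wt α z k)⁻¹ * ‖TG α z (GH H) k - TG α z (GH H') k‖ := by
          rw [← smul_sub, norm_smul, Real.norm_eq_abs, abs_of_pos (inv_pos.2 (hwpos k))]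
      _ ≤ (wt α z k)⁻¹ * (wt α z k / 2 * dist H H') :=
          mul_le_mul_of_nonneg_left hTGd (inv_pos.2 (hwpos k)).le
      _ = (1/2 : ℝ) * dist H H' := by
          have e : (wt α z k)⁻¹ * (wt α z k / 2 * dist H H')
              = ((wt α z k)⁻¹ * wt α z k) * (dist H H' / 2) := by ring
          rw [e, inv_mul_cancel₀ (hwpos k).ne', one_mul]
          ring
  have hcontr : ContractingWith (1/2 : NNReal) Φ := by
    constructor
    · rw [← NNReal.coe_lt_coe]; norm_num
    · apply LipschitzWith.of_dist_le_mul
      intro H H'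
      have := hlip H H'
      calc dist (Φ H) (Φ H') ≤ (1/2 : ℝ) * dist H H' := this
        _ = ((1/2 : NNReal) : ℝ) * dist H H' := by norm_num
  let H₀ := ContractingWith.fixedPoint Φ hcontr
  have hfix : Φ H₀ = H₀ := hcontr.fixedPoint_isFixedPt
  set G : ℕ → ℂ × ℂ := fun k => wt α z k • H₀ k with hGdef
  have hTG : ∀ k : ℕ, TG α z G k = G k := by
    intro k
    have h1 : Φ H₀ k = H₀ k := by rw [hfix]
    rw [hΦapp] at h1
    have h2 : wt α z k • ((wt α z k)⁻¹ • TG α z (GH H₀) k) = wt α z k • H₀ k := by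
      rw [h1]
    rw [smul_inv_smul₀ (hwpos k).ne'] at h2
    have hGH : GH H₀ = G := rfl
    rw [hGH] at h2
    exact h2
  have habsG2 : ∀ k n : ℕ, ‖(G (k + 1 + n)).2‖ ≤ wt α z (k + 1 + n) * ‖H₀‖ :=
    fun k n => habs2 H₀ k n
  have habsG1 : ∀ k n : ℕ, ‖(G (k + 1 + n)).1‖ ≤ wt α z (k + 1 + n) * ‖H₀‖ :=
    fun k n => habs1 H₀ k n
  refine ⟨G, ⟨2 * (wt α z 0 * ‖H₀‖), fun k => ?_⟩, fun k => ?_⟩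
  · calc enorm2 (G k) ≤ 2 * ‖G k‖ := enorm2_le _
      _ ≤ 2 * (wt α z 0 * ‖H₀‖) := by
          apply mul_le_mul_of_nonneg_left _ (by norm_num : (0:ℝ) ≤ 2)
          calc ‖G k‖ = wt α z k * ‖H₀ k‖ := by
                rw [hGdef]
                simp only []
                rw [norm_smul, Real.norm_eq_abs, abs_of_pos (hwpos k)]
            _ ≤ wt α z 0 * ‖H₀‖ :=
                mul_le_mul (wt_anti α z hb (Nat.zero_le k)) (H₀.norm_coe_le_norm k)
                  (norm_nonneg _) (hwpos 0).le
  · have hA := tsum_ker_wt_bound α z hb k (KA α z k) (fun n => (G (k + 1 + n)).2)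
      ‖H₀‖ (norm_nonneg _) (fun n => abs_KA_le α z k n) (habsG2 k)
    have hB := tsum_ker_wt_bound α z hb k (KB α z k) (fun n => (G (k + 1 + n)).1)
      ‖H₀‖ (norm_nonneg _) (fun n => abs_KB_le α z k n) (habsG1 k)
    refine ⟨hA.1, hB.1, ?_, ?_⟩
    · have := congrArg Prod.fst (hTG k)
      exact this.symm
    · have := congrArg Prod.snd (hTG k)
      exact this.symm

end JostAux
end

theorem jost_solution_exists_unique (γ C : ℝ) (hγ : 1 < γ) (hC : 0 < C)
    (α : ℕ → ℂ) (hα : SuperExpDecay γ C α) (z : ℂ) :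
    ∃! G : ℕ → ℂ × ℂ,
      (∃ M : ℝ, ∀ k : ℕ, enorm2 (G k) ≤ M) ∧
      ∀ k : ℕ,
        Summable (fun n : ℕ => ‖α (k + 1 + n) * cmvZeta (k + 1 + n) z * (G (k + 1 + n)).2‖) ∧
        Summable (fun n : ℕ => ‖z ^ n * conj (α (k + 1 + n)) * cmvZeta (k + 1) z * (G (k + 1 + n)).1‖) ∧
        (G k).1 = 1 - ∑' n : ℕ, α (k + 1 + n) * cmvZeta (k + 1 + n) z * (G (k + 1 + n)).2 ∧
        (G k).2 = - ∑' n : ℕ, z ^ n * conj (α (k + 1 + n)) * cmvZeta (k + 1) z * (G (k + 1 + n)).1 := by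
  have hb : Summable (JostAux.bet α z) := JostAux.summable_bet α z hγ hC hα
  obtain ⟨G, hGb, hGe⟩ := JostAux.sol_exists α z hb
  refine ⟨G, ⟨hGb, hGe⟩, ?_⟩
  intro G' hG'
  exact JostAux.sol_unique α z hb G' G hG'.1 hG'.2 hGb hGe
end

section
/- Let γ>1, C>0, let α : ℕ → ℂ satisfy |α_n| ≤ C·exp(−n^γ) for all n ≥ 1, and let F be a Jost solution for α. Then for every z ∈ ℂ and every k ≥ 0, ‖F(z,k) − (1,0)‖ ≤ β(z,k)·exp(β(z,k)), where β(z,k) = Σ_{n=k+1}^∞ |α_n|·max{1,|z|^{2n−1}} (this series converges by the decay assumption). -/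
open Complex Filter
open scoped ComplexConjugate Topology

-- AUX SECTION (to be inserted before the theorem)
noncomputable section JostAux

lemma aux_binom (i : ℕ) {a b : ℝ} (ha : 0 ≤ a) (hb : 0 ≤ b) :
    ((i : ℝ) + 1) * b ^ i * a ≤ (a + b) ^ (i + 1) - b ^ (i + 1) := by
  induction i with
  | zero => simp
  | succ i ih =>
    have key := mul_le_mul_of_nonneg_left ih (add_nonneg ha hb)
    have h1 : 0 ≤ b ^ i := pow_nonneg hb i
    have h2 : 0 ≤ b ^ (i + 1) := pow_nonneg hb (i + 1)
    have h3 : (0:ℝ) ≤ (i : ℝ) + 1 := by positivity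
    have e1 : (a + b) ^ (i + 1 + 1) = (a + b) * (a + b) ^ (i + 1) := by ring
    have e2 : b ^ (i + 1 + 1) = b * b ^ (i + 1) := by ring
    have e3 : b ^ (i + 1) = b * b ^ i := by ring
    have h5 : ((i:ℝ) + 1) * b ^ i * a * b ≤ ((i:ℝ) + 1) * b ^ i * a * (a + b) := by
      have : (0:ℝ) ≤ ((i:ℝ) + 1) * b ^ i * a := by positivity
      nlinarith
    rw [e1, e2, e3]
    rw [e3] at key
    push_cast
    nlinarith [key, h5]

lemma aux_sqrt (s t : ℝ) (ht : 0 ≤ t) :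
    Real.sqrt (s ^ 2 + (1 + t) ^ 2) ≤ 1 + Real.sqrt (t ^ 2 + s ^ 2) := by
  have h1 : (0:ℝ) ≤ t ^ 2 + s ^ 2 := by positivity
  have h2 : Real.sqrt (t ^ 2 + s ^ 2) ^ 2 = t ^ 2 + s ^ 2 := Real.sq_sqrt h1
  have h3 : t ≤ Real.sqrt (t ^ 2 + s ^ 2) := by
    have h := Real.sqrt_le_sqrt (show t ^ 2 ≤ t ^ 2 + s ^ 2 by nlinarith)
    rwa [Real.sqrt_sq ht] at h
  have h4 : (0:ℝ) ≤ 1 + Real.sqrt (t ^ 2 + s ^ 2) := by positivity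
  rw [show (1:ℝ) + Real.sqrt (t ^ 2 + s ^ 2)
      = Real.sqrt ((1 + Real.sqrt (t ^ 2 + s ^ 2)) ^ 2) from (Real.sqrt_sq h4).symm]
  exact Real.sqrt_le_sqrt (by nlinarith)

lemma aux_sqrt_mono {x y X Y : ℝ} (hx : 0 ≤ x) (hy : 0 ≤ y) (h1 : x ≤ X) (h2 : y ≤ Y) :
    Real.sqrt (x ^ 2 + y ^ 2) ≤ Real.sqrt (X ^ 2 + Y ^ 2) := by
  apply Real.sqrt_le_sqrt
  gcongr

lemma aux_max_pow_le {r : ℝ} (hr : 0 ≤ r) {s t : ℕ} (hst : s ≤ t) :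
    max 1 (r ^ s) ≤ max 1 (r ^ t) := by
  rcases le_total r 1 with h | h
  · exact max_le (le_max_left _ _) ((pow_le_one₀ hr h).trans (le_max_left _ _))
  · exact max_le (le_max_left _ _) ((pow_le_pow_right₀ h hst).trans (le_max_right _ _))

lemma aux_pow_mul_max {r : ℝ} (hr : 0 ≤ r) (n : ℕ) :
    r ^ n * max 1 r ≤ max 1 (r ^ (n + 1)) := by
  rcases le_total r 1 with h | h
  · have e : r ^ n * max 1 r = r ^ n := by rw [max_eq_left h, mul_one]
    rw [e]
    exact (pow_le_one₀ hr h).trans (le_max_left _ _)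
  · rw [max_eq_right h, ← pow_succ]
    exact le_max_right _ _

lemma aux_pt_bound {x y p q A : ℝ} (hx : 0 ≤ x) (hy : 0 ≤ y) (hA : 0 ≤ A)
    (h1 : x ≤ A * p) (h2 : y ≤ A * q) :
    Real.sqrt (x ^ 2 + y ^ 2) ≤ A * Real.sqrt (p ^ 2 + q ^ 2) := by
  calc Real.sqrt (x ^ 2 + y ^ 2) ≤ Real.sqrt ((A * p) ^ 2 + (A * q) ^ 2) :=
        aux_sqrt_mono hx hy h1 h2
    _ = A * Real.sqrt (p ^ 2 + q ^ 2) := by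
        rw [show (A * p) ^ 2 + (A * q) ^ 2 = A ^ 2 * (p ^ 2 + q ^ 2) by ring,
          Real.sqrt_mul (sq_nonneg A), Real.sqrt_sq hA]

lemma aux_one_plus (F1 F2 : ℂ) :
    Real.sqrt (‖F2‖ ^ 2 + ‖F1‖ ^ 2)
      ≤ 1 + Real.sqrt (‖F1 - 1‖ ^ 2 + ‖F2‖ ^ 2) := by
  have ht : ‖F1‖ ≤ 1 + ‖F1 - 1‖ := by
    have e : F1 = 1 + (F1 - 1) := by ring
    calc ‖F1‖ = ‖1 + (F1 - 1)‖ := by rw [← e]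
      _ ≤ ‖1‖ + ‖F1 - 1‖ := norm_add_le _ _
      _ = 1 + ‖F1 - 1‖ := by rw [norm_one]
  calc Real.sqrt (‖F2‖ ^ 2 + ‖F1‖ ^ 2)
      ≤ Real.sqrt (‖F2‖ ^ 2 + (1 + ‖F1 - 1‖) ^ 2) :=
        aux_sqrt_mono (norm_nonneg _) (norm_nonneg _) le_rfl ht
    _ ≤ 1 + Real.sqrt (‖F1 - 1‖ ^ 2 + ‖F2‖ ^ 2) :=
        aux_sqrt _ _ (norm_nonneg _)

def jostAuxE : (ℂ × ℂ) ≃L[ℝ] WithLp 2 (ℂ × ℂ) := (WithLp.prodContinuousLinearEquiv 2 ℝ ℂ ℂ).symm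

lemma jostAuxE_norm (v : ℂ × ℂ) :
    ‖jostAuxE v‖ = Real.sqrt (‖v.1‖ ^ 2 + ‖v.2‖ ^ 2) := by
  rw [WithLp.prod_norm_eq_of_L2]
  rfl

lemma aux_tsum_norm (g1 g2 : ℕ → ℂ) (c : ℕ → ℝ)
    (hs1 : Summable fun n => ‖g1 n‖) (hs2 : Summable fun n => ‖g2 n‖)
    (hc : Summable c)
    (hpt : ∀ n, Real.sqrt (‖g1 n‖ ^ 2 + ‖g2 n‖ ^ 2) ≤ c n) :
    Real.sqrt (‖∑' n, g1 n‖ ^ 2 + ‖∑' n, g2 n‖ ^ 2) ≤ ∑' n, c n := by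
  have hg1 : Summable g1 := Summable.of_norm hs1
  have hg2 : Summable g2 := Summable.of_norm hs2
  have hE : HasSum (fun n => jostAuxE (g1 n, g2 n)) (jostAuxE (∑' n, g1 n, ∑' n, g2 n)) :=
    (hg1.hasSum.prodMk hg2.hasSum).mapL jostAuxE.toContinuousLinearMap
  have hns : Summable (fun n => ‖jostAuxE (g1 n, g2 n)‖) := by
    apply Summable.of_nonneg_of_le (fun n => norm_nonneg _) (fun n => ?_) hc
    rw [jostAuxE_norm]
    exact hpt n
  calc Real.sqrt (‖∑' n, g1 n‖ ^ 2 + ‖∑' n, g2 n‖ ^ 2)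
      = ‖∑' n, jostAuxE (g1 n, g2 n)‖ := by rw [hE.tsum_eq, jostAuxE_norm]
    _ ≤ ∑' n, ‖jostAuxE (g1 n, g2 n)‖ := norm_tsum_le_tsum_norm hns
    _ ≤ ∑' n, c n := by
        apply Summable.tsum_le_tsum (fun n => ?_) hns hc
        rw [jostAuxE_norm]
        exact hpt n

end JostAux

lemma aux_gronwall (a : ℕ → ℝ) (ha0 : ∀ n, 0 ≤ a n) (ha : Summable a)
    (D : ℕ → ℝ) (hD0 : ∀ k, 0 ≤ D k) (M : ℝ) (hM0 : 0 ≤ M) (hM : ∀ k, D k ≤ M)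
    (hrec : ∀ k, D k ≤ ∑' n, a (k + 1 + n) * (1 + D (k + 1 + n))) (k : ℕ) :
    D k ≤ (∑' n, a (k + 1 + n)) * Real.exp (∑' n, a (k + 1 + n)) := by
  -- tail sums
  set b : ℕ → ℝ := fun m => ∑' n, a (m + 1 + n) with hb
  have hsum : ∀ m : ℕ, Summable (fun n => a (m + 1 + n)) := by
    intro m
    refine ((summable_nat_add_iff (m + 1)).2 ha).congr fun n => ?_
    congr 1; omega
  have hb0 : ∀ m, 0 ≤ b m := fun m => tsum_nonneg fun n => ha0 _
  have hbrec : ∀ m, b m = a (m + 1) + b (m + 1) := by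
    intro m
    have h := Summable.tsum_eq_zero_add (hsum m)
    simp only [Nat.add_zero] at h
    rw [hb]
    simp only
    rw [h]
    congr 1
    apply tsum_congr; intro n; congr 1; omega
  have hbanti : Antitone b := by
    apply antitone_nat_of_succ_le
    intro m
    have := hbrec m
    have := ha0 (m + 1)
    linarith
  -- summability of weighted tails
  have hsummul : ∀ (m : ℕ) (c : ℕ → ℝ) (c0 : ℝ), (∀ n, 0 ≤ c n) → (∀ n, c n ≤ c0) →
      Summable (fun n => a (m + 1 + n) * c n) := by
    intro m c c0 hc0 hcle
    apply Summable.of_nonneg_of_le (fun n => mul_nonneg (ha0 _) (hc0 n))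
      (fun n => mul_le_mul_of_nonneg_left (hcle n) (ha0 _))
    exact (hsum m).mul_right c0
  -- the telescoping key estimate
  have key : ∀ (i m : ℕ), ∑' n, a (m + 1 + n) * b (m + 1 + n) ^ i ≤ b m ^ (i + 1) / ((i : ℝ) + 1) := by
    intro i m
    apply Real.tsum_le_of_sum_range_le (fun n => mul_nonneg (ha0 _) (pow_nonneg (hb0 _) _))
    intro N
    have step : ∀ n : ℕ, a (m + 1 + n) * b (m + 1 + n) ^ i ≤
        b (m + n) ^ (i+1) / ((i:ℝ)+1) - b (m + (n+1)) ^ (i+1) / ((i:ℝ)+1) := by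
      intro n
      have hip : (0:ℝ) < (i:ℝ) + 1 := by positivity
      rw [div_sub_div_same, le_div_iff₀ hip]
      have hb' : b (m + n) = a (m + 1 + n) + b (m + 1 + n) := by
        have := hbrec (m + n)
        rw [this]
        congr 2 <;> omega
      rw [hb']
      have := aux_binom i (ha0 (m + 1 + n)) (hb0 (m + 1 + n))
      have e : b (m + (n+1)) = b (m + 1 + n) := by congr 1; omega
      rw [e]
      nlinarith [this]
    calc ∑ n ∈ Finset.range N, a (m + 1 + n) * b (m + 1 + n) ^ i
        ≤ ∑ n ∈ Finset.range N, (b (m + n) ^ (i+1) / ((i:ℝ)+1) - b (m + (n+1)) ^ (i+1) / ((i:ℝ)+1)) :=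
          Finset.sum_le_sum fun n _ => step n
      _ = b (m + 0) ^ (i+1) / ((i:ℝ)+1) - b (m + N) ^ (i+1) / ((i:ℝ)+1) :=
          Finset.sum_range_sub' (fun n => b (m + n) ^ (i+1) / ((i:ℝ)+1)) N
      _ ≤ b m ^ (i + 1) / ((i : ℝ) + 1) := by
          have : 0 ≤ b (m + N) ^ (i+1) / ((i:ℝ)+1) :=
            div_nonneg (pow_nonneg (hb0 _) _) (by positivity)
          simp only [Nat.add_zero]
          linarith
  -- main induction
  have main : ∀ (j m : ℕ), D m ≤ b m * (∑ i ∈ Finset.range j, b m ^ i / (Nat.factorial i : ℝ))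
      + M * b m ^ j / (Nat.factorial j : ℝ) := by
    intro j
    induction j with
    | zero => intro m; simpa using hM m
    | succ j ih =>
      intro m
      -- start from the recursion
      have h1 : D m ≤ ∑' n, a (m + 1 + n) * (1 + D (m + 1 + n)) := hrec m
      have hsD : Summable (fun n => a (m + 1 + n) * D (m + 1 + n)) :=
        hsummul m _ M (fun n => hD0 _) (fun n => hM _)
      have hsplit : ∑' n, a (m + 1 + n) * (1 + D (m + 1 + n))
          = b m + ∑' n, a (m + 1 + n) * D (m + 1 + n) := by
        rw [hb]; simp only
        rw [← Summable.tsum_add (hsum m) hsD]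
        apply tsum_congr; intro n; ring
      -- bound the D-term using ih
      have hmid : ∀ n : ℕ, a (m + 1 + n) * D (m + 1 + n) ≤
          (∑ i ∈ Finset.range j, a (m + 1 + n) * b (m + 1 + n) ^ (i+1) / (Nat.factorial i : ℝ))
          + (M / (Nat.factorial j : ℝ)) * (a (m + 1 + n) * b (m + 1 + n) ^ j) := by
        intro n
        have := mul_le_mul_of_nonneg_left (ih (m + 1 + n)) (ha0 (m + 1 + n))
        calc a (m + 1 + n) * D (m + 1 + n)
            ≤ a (m + 1 + n) * (b (m+1+n) * (∑ i ∈ Finset.range j, b (m+1+n) ^ i / (Nat.factorial i : ℝ))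
              + M * b (m+1+n) ^ j / (Nat.factorial j : ℝ)) := this
          _ = _ := by
              rw [mul_add, Finset.mul_sum, Finset.mul_sum]
              congr 1
              · apply Finset.sum_congr rfl; intro i _; ring
              · ring
      -- summability of the RHS pieces
      have hsump : ∀ i : ℕ, Summable (fun n => a (m + 1 + n) * b (m + 1 + n) ^ i) :=
        fun i => hsummul m _ (b 0 ^ i) (fun n => pow_nonneg (hb0 _) _)
          (fun n => pow_le_pow_left₀ (hb0 _) (hbanti (Nat.zero_le _)) i)
      have hsRHS : Summable (fun n =>
          (∑ i ∈ Finset.range j, a (m + 1 + n) * b (m + 1 + n) ^ (i+1) / (Nat.factorial i : ℝ))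
          + (M / (Nat.factorial j : ℝ)) * (a (m + 1 + n) * b (m + 1 + n) ^ j)) := by
        apply Summable.add
        · apply summable_sum
          intro i _
          exact (hsump (i+1)).div_const _
        · exact (hsump j).mul_left _
      have h2 : ∑' n, a (m + 1 + n) * D (m + 1 + n) ≤
          (∑ i ∈ Finset.range j, (∑' n, a (m + 1 + n) * b (m + 1 + n) ^ (i+1)) / (Nat.factorial i : ℝ))
          + (M / (Nat.factorial j : ℝ)) * (∑' n, a (m + 1 + n) * b (m + 1 + n) ^ j) := by
        calc ∑' n, a (m + 1 + n) * D (m + 1 + n)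
            ≤ ∑' n, ((∑ i ∈ Finset.range j, a (m + 1 + n) * b (m + 1 + n) ^ (i+1) / (Nat.factorial i : ℝ))
              + (M / (Nat.factorial j : ℝ)) * (a (m + 1 + n) * b (m + 1 + n) ^ j)) :=
              Summable.tsum_le_tsum hmid hsD hsRHS
          _ = _ := by
              rw [Summable.tsum_add (by
                  apply summable_sum; intro i _; exact (hsump (i+1)).div_const _)
                ((hsump j).mul_left _)]
              congr 1
              · rw [Summable.tsum_finsetSum (fun i _ => (hsump (i+1)).div_const _)]
                apply Finset.sum_congr rfl
                intro i _
                rw [tsum_div_const]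
              · rw [tsum_mul_left]
      -- apply key estimates
      have h3 : ∑' n, a (m + 1 + n) * D (m + 1 + n) ≤
          (∑ i ∈ Finset.range j, (b m ^ (i+1+1) / ((i:ℝ)+1+1)) / (Nat.factorial i : ℝ))
          + (M / (Nat.factorial j : ℝ)) * (b m ^ (j+1) / ((j:ℝ)+1)) := by
        refine h2.trans (add_le_add ?_ ?_)
        · apply Finset.sum_le_sum
          intro i _
          have hk := key (i+1) m
          push_cast at hk
          gcongr
        · exact mul_le_mul_of_nonneg_left (key j m) (by positivity)
      -- assemble
      have hgoal : b m + ((∑ i ∈ Finset.range j, (b m ^ (i+1+1) / ((i:ℝ)+1+1)) / (Nat.factorial i : ℝ))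
          + (M / (Nat.factorial j : ℝ)) * (b m ^ (j+1) / ((j:ℝ)+1))) ≤
          b m * (∑ i ∈ Finset.range (j+1), b m ^ i / (Nat.factorial i : ℝ))
          + M * b m ^ (j+1) / (Nat.factorial (j+1) : ℝ) := by
        have e1 : b m * (∑ i ∈ Finset.range (j+1), b m ^ i / (Nat.factorial i : ℝ))
            = (∑ i ∈ Finset.range j, b m ^ (i+1+1) / (Nat.factorial (i+1) : ℝ)) + b m := by
          rw [Finset.sum_range_succ', mul_add, Finset.mul_sum]
          simp only [Nat.factorial_zero, pow_zero]
          congr 1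
          · apply Finset.sum_congr rfl; intro i _; ring
          · norm_num
        have e2 : M * b m ^ (j+1) / (Nat.factorial (j+1) : ℝ)
            = (M / (Nat.factorial j : ℝ)) * (b m ^ (j+1) / ((j:ℝ)+1)) := by
          have hf : (Nat.factorial j : ℝ) ≠ 0 := Nat.cast_ne_zero.2 (Nat.factorial_ne_zero j)
          have hj : ((j:ℝ) + 1) ≠ 0 := by positivity
          rw [Nat.factorial_succ]
          push_cast
          field_simp
          try ring
          try exact Or.inl trivial
        rw [e1, e2]
        have : (∑ i ∈ Finset.range j, (b m ^ (i+1+1) / ((i:ℝ)+1+1)) / (Nat.factorial i : ℝ))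
            ≤ ∑ i ∈ Finset.range j, b m ^ (i+1+1) / (Nat.factorial (i+1) : ℝ) := by
          apply Finset.sum_le_sum
          intro i _
          rw [div_div]
          apply div_le_div_of_nonneg_left (pow_nonneg (hb0 m) _) (by positivity)
          rw [Nat.factorial_succ]
          push_cast
          have : (1:ℝ) ≤ (Nat.factorial i : ℝ) := by
            exact_mod_cast Nat.one_le_iff_ne_zero.2 (Nat.factorial_ne_zero i)
          nlinarith [Nat.cast_nonneg (α := ℝ) i]
        linarith
      calc D m ≤ b m + ∑' n, a (m + 1 + n) * D (m + 1 + n) := by rw [← hsplit]; exact h1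
        _ ≤ b m + ((∑ i ∈ Finset.range j, (b m ^ (i+1+1) / ((i:ℝ)+1+1)) / (Nat.factorial i : ℝ))
            + (M / (Nat.factorial j : ℝ)) * (b m ^ (j+1) / ((j:ℝ)+1))) := by linarith
        _ ≤ _ := hgoal
  -- pass to the limit
  have hexp : ∀ j : ℕ, D k ≤ b k * Real.exp (b k) + M * b k ^ j / (Nat.factorial j : ℝ) := by
    intro j
    have := main j k
    have hle : (∑ i ∈ Finset.range j, b k ^ i / (Nat.factorial i : ℝ)) ≤ Real.exp (b k) :=
      Real.sum_le_exp_of_nonneg (hb0 k) j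
    have := mul_le_mul_of_nonneg_left hle (hb0 k)
    linarith [main j k]
  have hlim : Tendsto (fun j : ℕ => b k * Real.exp (b k) + M * b k ^ j / (Nat.factorial j : ℝ))
      atTop (nhds (b k * Real.exp (b k))) := by
    have h0 : Tendsto (fun j : ℕ => b k ^ j / (Nat.factorial j : ℝ)) atTop (nhds 0) :=
      FloorSemiring.tendsto_pow_div_factorial_atTop (b k)
    have := (h0.const_mul M).const_add (b k * Real.exp (b k))
    simpa [mul_div_assoc] using this
  exact ge_of_tendsto hlim (Eventually.of_forall hexp)

lemma aux_summable (γ C : ℝ) (hγ : 1 < γ) (hC : 0 < C) (α : ℕ → ℂ)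
    (hα : SuperExpDecay γ C α) (z : ℂ) :
    Summable (fun n : ℕ => ‖α n‖ * max 1 (‖z‖ ^ (2 * n - 1))) := by
  set r : ℝ := ‖z‖ with hr
  have hr0 : 0 ≤ r := norm_nonneg z
  set R : ℝ := max 1 r with hR
  have hR1 : 1 ≤ R := le_max_left _ _
  set Q : ℝ := R ^ 2 with hQ
  have hQ1 : 1 ≤ Q := one_le_pow₀ hR1
  have hQ0 : 0 < Q := lt_of_lt_of_le one_pos hQ1
  set c : ℝ := Real.log Q + 1 with hc
  have hc0 : 0 < c := by
    have := Real.log_nonneg hQ1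
    simp only [hc]; linarith
  -- pick N
  obtain ⟨N₀, hN₀⟩ := exists_nat_ge (c ^ (1 / (γ - 1)))
  set N : ℕ := N₀ + 1 with hN
  have hNc : c ^ (1 / (γ - 1)) ≤ (N : ℝ) := by
    rw [hN]; push_cast; linarith
  have hN1 : 1 ≤ N := by omega
  -- bound for large n
  have hbig : ∀ n : ℕ, N ≤ n →
      ‖α n‖ * max 1 (r ^ (2 * n - 1)) ≤ C * Real.exp (-(n : ℝ)) := by
    intro n hn
    have hn1 : 1 ≤ n := le_trans hN1 hn
    have hnR : (1:ℝ) ≤ (n:ℝ) := by exact_mod_cast hn1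
    have hmax : max 1 (r ^ (2 * n - 1)) ≤ Q ^ n := by
      have h1 : (1:ℝ) ≤ Q ^ n := one_le_pow₀ hQ1
      have h2 : r ^ (2 * n - 1) ≤ R ^ (2 * n - 1) :=
        pow_le_pow_left₀ hr0 (le_max_right _ _) _
      have h3 : R ^ (2 * n - 1) ≤ R ^ (2 * n) := pow_le_pow_right₀ hR1 (by omega)
      have h4 : R ^ (2 * n) = Q ^ n := by rw [hQ, ← pow_mul]
      exact max_le h1 (h2.trans (h3.trans_eq h4))
    have hexp : Real.exp (-(n:ℝ) ^ γ) * Q ^ n ≤ Real.exp (-(n:ℝ)) := by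
      have hQn : Q ^ n = Real.exp ((n : ℝ) * Real.log Q) := by
        rw [← Real.log_pow, Real.exp_log (pow_pos hQ0 n)]
      rw [hQn, ← Real.exp_add]
      apply Real.exp_le_exp.2
      -- need : -(n)^γ + n * log Q ≤ -n, i.e. n^γ ≥ n * (log Q + 1)
      have hpow : (n:ℝ) * c ≤ (n:ℝ) ^ γ := by
        have hnpos : (0:ℝ) < (n:ℝ) := by linarith
        have hNcn : c ^ (1 / (γ - 1)) ≤ (n:ℝ) := hNc.trans (by exact_mod_cast hn)
        have h5 : c ≤ (n:ℝ) ^ (γ - 1) := by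
          have h6 : (c ^ (1 / (γ - 1))) ^ (γ - 1) ≤ ((n:ℝ)) ^ (γ - 1) :=
            Real.rpow_le_rpow (Real.rpow_nonneg hc0.le _) hNcn (by linarith)
          rwa [← Real.rpow_mul hc0.le,
            one_div_mul_cancel (by linarith : γ - 1 ≠ 0), Real.rpow_one] at h6
        have h7 : (n:ℝ) ^ γ = (n:ℝ) * (n:ℝ) ^ (γ - 1) := by
          rw [show (n:ℝ) * (n:ℝ) ^ (γ - 1) = (n:ℝ) ^ (1:ℝ) * (n:ℝ) ^ (γ - 1) by
            rw [Real.rpow_one], ← Real.rpow_add hnpos]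
          congr 1
          ring
        rw [h7]
        exact mul_le_mul_of_nonneg_left h5 (by linarith)
      have := Real.log_nonneg hQ1
      simp only [hc] at hpow
      nlinarith
    calc ‖α n‖ * max 1 (r ^ (2 * n - 1))
        ≤ (C * Real.exp (-(n : ℝ) ^ γ)) * (Q ^ n) := by
          apply mul_le_mul (hα n hn1) hmax (le_trans zero_le_one (le_max_left _ _)) (by positivity)
      _ = C * (Real.exp (-(n : ℝ) ^ γ) * Q ^ n) := by ring
      _ ≤ C * Real.exp (-(n:ℝ)) := mul_le_mul_of_nonneg_left hexp hC.le
  -- conclude summability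
  apply (summable_nat_add_iff N).1
  apply Summable.of_nonneg_of_le
    (fun n => mul_nonneg (norm_nonneg _) (le_trans zero_le_one (le_max_left _ _)))
    (fun n => ?_)
  · exact (Real.summable_exp_neg_nat.mul_left C)
  · calc ‖α (n + N)‖ * max 1 (r ^ (2 * (n + N) - 1))
        ≤ C * Real.exp (-((n + N : ℕ) : ℝ)) := hbig (n + N) (by omega)
      _ ≤ C * Real.exp (-(n:ℝ)) := by
          apply mul_le_mul_of_nonneg_left _ hC.le
          apply Real.exp_le_exp.2
          push_cast
          linarith [Nat.cast_nonneg (α := ℝ) N]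

theorem jost_solution_estimate (γ C : ℝ) (hγ : 1 < γ) (hC : 0 < C)
    (α : ℕ → ℂ) (hα : SuperExpDecay γ C α)
    (F : ℂ → ℕ → ℂ × ℂ) (hF : IsJostSolution α F) (z : ℂ) (k : ℕ) :
    enorm2 ((F z k).1 - 1, (F z k).2) ≤
      (∑' n : ℕ, ‖α (k + 1 + n)‖ * max 1 (‖z‖ ^ (2 * (k + 1 + n) - 1))) *
        Real.exp (∑' n : ℕ, ‖α (k + 1 + n)‖ * max 1 (‖z‖ ^ (2 * (k + 1 + n) - 1))) := by
  obtain ⟨hbdd, hJ⟩ := hF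
  obtain ⟨M₀, hM₀⟩ := hbdd z
  have hM₀0 : 0 ≤ M₀ := le_trans (Real.sqrt_nonneg _) (hM₀ 0)
  have ha : Summable (fun n : ℕ => ‖α n‖ * max 1 (‖z‖ ^ (2 * n - 1))) :=
    aux_summable γ C hγ hC α hα z
  have ha0 : ∀ n : ℕ, 0 ≤ ‖α n‖ * max 1 (‖z‖ ^ (2 * n - 1)) :=
    fun n => mul_nonneg (norm_nonneg _) (le_trans zero_le_one (le_max_left _ _))
  have hatail : ∀ m : ℕ, Summable (fun n : ℕ =>
      ‖α (m + 1 + n)‖ * max 1 (‖z‖ ^ (2 * (m + 1 + n) - 1))) := by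
    intro m
    refine ((summable_nat_add_iff (m + 1)).2 ha).congr fun n => ?_
    rw [show n + (m + 1) = m + 1 + n by omega]
  have hD0 : ∀ m : ℕ, 0 ≤ enorm2 ((F z m).1 - 1, (F z m).2) := fun m => Real.sqrt_nonneg _
  have hDM : ∀ m : ℕ, enorm2 ((F z m).1 - 1, (F z m).2) ≤ 1 + M₀ := by
    intro m
    have hx : ‖(F z m).1 - 1‖ ≤ 1 + ‖(F z m).1‖ := by
      rw [sub_eq_add_neg]
      calc ‖(F z m).1 + -1‖ ≤ ‖(F z m).1‖ + ‖(-1)‖ :=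
            norm_add_le _ _
        _ = 1 + ‖(F z m).1‖ := by rw [norm_neg, norm_one]; ring
    have hMm := hM₀ m
    simp only [enorm2] at hMm ⊢
    calc Real.sqrt (‖(F z m).1 - 1‖ ^ 2 + ‖(F z m).2‖ ^ 2)
        ≤ Real.sqrt (‖(F z m).2‖ ^ 2 + (1 + ‖(F z m).1‖) ^ 2) := by
          rw [add_comm (‖(F z m).1 - 1‖ ^ 2)]
          exact aux_sqrt_mono (norm_nonneg _) (norm_nonneg _) le_rfl hx
      _ ≤ 1 + Real.sqrt (‖(F z m).1‖ ^ 2 + ‖(F z m).2‖ ^ 2) :=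
          aux_sqrt _ _ (norm_nonneg _)
      _ ≤ 1 + M₀ := by linarith
  have hrec : ∀ m : ℕ, enorm2 ((F z m).1 - 1, (F z m).2) ≤
      ∑' n : ℕ, (‖α (m + 1 + n)‖ * max 1 (‖z‖ ^ (2 * (m + 1 + n) - 1)))
        * (1 + enorm2 ((F z (m + 1 + n)).1 - 1, (F z (m + 1 + n)).2)) := by
    intro m
    obtain ⟨hs1, hs2, h1, h2⟩ := hJ z m
    have hpt : ∀ n : ℕ, Real.sqrt
        (‖α (m + 1 + n) * cmvZeta (m + 1 + n) z * (F z (m + 1 + n)).2‖ ^ 2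
          + ‖z ^ n * conj (α (m + 1 + n)) * cmvZeta (m + 1) z * (F z (m + 1 + n)).1‖ ^ 2)
        ≤ (‖α (m + 1 + n)‖ * max 1 (‖z‖ ^ (2 * (m + 1 + n) - 1)))
          * (1 + enorm2 ((F z (m + 1 + n)).1 - 1, (F z (m + 1 + n)).2)) := by
      intro n
      have hA0 : 0 ≤ ‖α (m + 1 + n)‖ * max 1 (‖z‖ ^ (2 * (m + 1 + n) - 1)) :=
        ha0 _
      have hzeta : ∀ j : ℕ, ‖cmvZeta j z‖ ≤ max 1 (‖z‖) := by
        intro j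
        unfold cmvZeta
        split
        · exact le_max_right _ _
        · simp
      have hw : max 1 (‖z‖) ≤ max 1 (‖z‖ ^ (2 * (m + 1 + n) - 1)) := by
        have h := aux_max_pow_le (norm_nonneg z) (show 1 ≤ 2 * (m + 1 + n) - 1 by omega)
        rwa [pow_one] at h
      have hb1 : ‖α (m + 1 + n) * cmvZeta (m + 1 + n) z * (F z (m + 1 + n)).2‖
          ≤ (‖α (m + 1 + n)‖ * max 1 (‖z‖ ^ (2 * (m + 1 + n) - 1)))
            * ‖(F z (m + 1 + n)).2‖ := by
        rw [norm_mul, norm_mul]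
        have h := (hzeta (m + 1 + n)).trans hw
        gcongr
      have hb2 : ‖z ^ n * conj (α (m + 1 + n)) * cmvZeta (m + 1) z * (F z (m + 1 + n)).1‖
          ≤ (‖α (m + 1 + n)‖ * max 1 (‖z‖ ^ (2 * (m + 1 + n) - 1)))
            * ‖(F z (m + 1 + n)).1‖ := by
        rw [norm_mul, norm_mul, norm_mul, norm_pow, Complex.norm_conj]
        have hzb : ‖z‖ ^ n * ‖cmvZeta (m + 1) z‖
            ≤ max 1 (‖z‖ ^ (2 * (m + 1 + n) - 1)) := by
          calc ‖z‖ ^ n * ‖cmvZeta (m + 1) z‖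
              ≤ ‖z‖ ^ n * max 1 (‖z‖) :=
                mul_le_mul_of_nonneg_left (hzeta (m + 1)) (pow_nonneg (norm_nonneg z) n)
            _ ≤ max 1 (‖z‖ ^ (n + 1)) := aux_pow_mul_max (norm_nonneg z) n
            _ ≤ _ := aux_max_pow_le (norm_nonneg z) (by omega)
        calc ‖z‖ ^ n * ‖α (m + 1 + n)‖ * ‖cmvZeta (m + 1) z‖
              * ‖(F z (m + 1 + n)).1‖
            = ‖α (m + 1 + n)‖ * (‖z‖ ^ n * ‖cmvZeta (m + 1) z‖)
              * ‖(F z (m + 1 + n)).1‖ := by ring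
          _ ≤ (‖α (m + 1 + n)‖ * max 1 (‖z‖ ^ (2 * (m + 1 + n) - 1)))
              * ‖(F z (m + 1 + n)).1‖ := by
              gcongr
      refine le_trans
        (aux_pt_bound (norm_nonneg _) (norm_nonneg _) hA0 hb1 hb2) ?_
      apply mul_le_mul_of_nonneg_left _ hA0
      simp only [enorm2]
      exact aux_one_plus _ _
    have hsum_c : Summable (fun n : ℕ =>
        (‖α (m + 1 + n)‖ * max 1 (‖z‖ ^ (2 * (m + 1 + n) - 1)))
          * (1 + enorm2 ((F z (m + 1 + n)).1 - 1, (F z (m + 1 + n)).2))) := by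
      refine Summable.of_nonneg_of_le
        (fun n => mul_nonneg (ha0 _) (by linarith [hD0 (m + 1 + n)]))
        (fun n => mul_le_mul_of_nonneg_left (by linarith [hDM (m + 1 + n)]) (ha0 _))
        ((hatail m).mul_right (1 + (1 + M₀)))
    have e1 : (F z m).1 - 1
        = -(∑' n : ℕ, α (m + 1 + n) * cmvZeta (m + 1 + n) z * (F z (m + 1 + n)).2) := by
      rw [h1]; ring
    show Real.sqrt (‖(F z m).1 - 1‖ ^ 2 + ‖(F z m).2‖ ^ 2) ≤ _
    rw [e1, h2, norm_neg, norm_neg]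
    exact aux_tsum_norm _ _ _ hs1 hs2 hsum_c hpt
  exact aux_gronwall (fun n => ‖α n‖ * max 1 (‖z‖ ^ (2 * n - 1))) ha0 ha
    (fun m => enorm2 ((F z m).1 - 1, (F z m).2)) hD0 (1 + M₀) (by linarith) hDM hrec k
end

section
/- Let γ>1, C>0, let α : ℕ → ℂ satisfy |α_n| ≤ C·exp(−n^γ) for all n ≥ 1, and let F be a Jost solution for α. Then for every z ∈ ℂ with |z| ≥ 1, ‖F(z,0)‖ ≤ exp(C + 2·K(z)·log|z|) · ∏_{n=1}^∞ (1+|α_n|), where K(z) = ⌊(log(2|z|²))^{1/(γ−1)}⌋ and the infinite product converges by the decay assumption. -/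
open Complex Filter
open scoped ComplexConjugate Topology

private lemma cs2 {a b c d : ℝ} (ha : 0 ≤ a) (hb : 0 ≤ b) (hc : 0 ≤ c) (hd : 0 ≤ d) :
    a * c + b * d ≤ Real.sqrt (a ^ 2 + b ^ 2) * Real.sqrt (c ^ 2 + d ^ 2) := by
  have h1 : (a * c + b * d) ^ 2 ≤ (a ^ 2 + b ^ 2) * (c ^ 2 + d ^ 2) := by
    nlinarith [sq_nonneg (a * d - b * c)]
  calc a * c + b * d = Real.sqrt ((a * c + b * d) ^ 2) := (Real.sqrt_sq (by positivity)).symm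
    _ ≤ Real.sqrt ((a ^ 2 + b ^ 2) * (c ^ 2 + d ^ 2)) := Real.sqrt_le_sqrt h1
    _ = _ := Real.sqrt_mul (by positivity) _

private lemma minkowski_tsum {f g : ℕ → ℝ} (hf0 : ∀ n, 0 ≤ f n) (hg0 : ∀ n, 0 ≤ g n)
    (hf : Summable f) (hg : Summable g) :
    Real.sqrt ((∑' n, f n) ^ 2 + (∑' n, g n) ^ 2) ≤ ∑' n, Real.sqrt (f n ^ 2 + g n ^ 2) := by
  set A := ∑' n, f n with hA'
  set B := ∑' n, g n with hB'
  have hA : 0 ≤ A := tsum_nonneg hf0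
  have hB : 0 ≤ B := tsum_nonneg hg0
  set S := Real.sqrt (A ^ 2 + B ^ 2) with hS'
  have hS : 0 ≤ S := Real.sqrt_nonneg _
  have hTsumm : Summable (fun n => Real.sqrt (f n ^ 2 + g n ^ 2)) := by
    apply Summable.of_nonneg_of_le (fun n => Real.sqrt_nonneg _) (fun n => ?_) (hf.add hg)
    have h1 : f n ^ 2 + g n ^ 2 ≤ (f n + g n) ^ 2 := by nlinarith [mul_nonneg (hf0 n) (hg0 n)]
    calc Real.sqrt (f n ^ 2 + g n ^ 2) ≤ Real.sqrt ((f n + g n) ^ 2) := Real.sqrt_le_sqrt h1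
      _ = f n + g n := Real.sqrt_sq (add_nonneg (hf0 n) (hg0 n))
  rcases hS.eq_or_lt with h0 | hSpos
  · exact le_trans (le_of_eq h0.symm) (tsum_nonneg fun n => Real.sqrt_nonneg _)
  · have hsq : S * S = A * A + B * B := by
      have : S ^ 2 = A ^ 2 + B ^ 2 := Real.sq_sqrt (by positivity)
      nlinarith [this]
    have key : S * S ≤ S * (∑' n, Real.sqrt (f n ^ 2 + g n ^ 2)) := by
      rw [hsq]
      have h1 : A * A + B * B = ∑' n, (A * f n + B * g n) := by
        rw [Summable.tsum_add (hf.mul_left A) (hg.mul_left B), tsum_mul_left, tsum_mul_left]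
      rw [h1]
      have h2 : ∀ n, A * f n + B * g n ≤ S * Real.sqrt (f n ^ 2 + g n ^ 2) := fun n =>
        cs2 hA hB (hf0 n) (hg0 n)
      calc ∑' n, (A * f n + B * g n) ≤ ∑' n, S * Real.sqrt (f n ^ 2 + g n ^ 2) := by
            apply Summable.tsum_le_tsum h2 ((hf.mul_left A).add (hg.mul_left B)) (hTsumm.mul_left S)
        _ = S * ∑' n, Real.sqrt (f n ^ 2 + g n ^ 2) := tsum_mul_left
    exact le_of_mul_le_mul_left key hSpos

private lemma sqrt_shift {A B : ℝ} (hA : 0 ≤ A) (hB : 0 ≤ B) :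
    Real.sqrt ((1 + A) ^ 2 + B ^ 2) ≤ 1 + Real.sqrt (A ^ 2 + B ^ 2) := by
  have h1 : A ≤ Real.sqrt (A ^ 2 + B ^ 2) := by
    calc A = Real.sqrt (A ^ 2) := (Real.sqrt_sq hA).symm
      _ ≤ _ := Real.sqrt_le_sqrt (by nlinarith)
  have h2 : (1 + A) ^ 2 + B ^ 2 ≤ (1 + Real.sqrt (A ^ 2 + B ^ 2)) ^ 2 := by
    have h3 : Real.sqrt (A ^ 2 + B ^ 2) ^ 2 = A ^ 2 + B ^ 2 := Real.sq_sqrt (by positivity)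
    nlinarith [h1, h3]
  calc Real.sqrt ((1 + A) ^ 2 + B ^ 2) ≤ Real.sqrt ((1 + Real.sqrt (A ^ 2 + B ^ 2)) ^ 2) :=
        Real.sqrt_le_sqrt h2
    _ = _ := Real.sqrt_sq (by positivity)

private lemma cmvZeta_abs_le {z : ℂ} (hz : 1 ≤ ‖z‖) (n : ℕ) :
    ‖cmvZeta n z‖ ≤ ‖z‖ := by
  unfold cmvZeta; split_ifs <;> simp [hz]

private lemma cmvZeta_ne_zero {z : ℂ} (hz : z ≠ 0) (n : ℕ) : cmvZeta n z ≠ 0 := by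
  unfold cmvZeta; split_ifs <;> simp [hz]

private lemma jost_step {α : ℕ → ℂ} {F : ℂ → ℕ → ℂ × ℂ} (hF : IsJostSolution α F)
    {z : ℂ} (hz0 : z ≠ 0) (k : ℕ) :
    (F z k).1 = (F z (k + 1)).1 - α (k + 1) * cmvZeta (k + 1) z * (F z (k + 1)).2 ∧
    (F z k).2 = -(conj (α (k + 1)) * cmvZeta (k + 1) z * (F z (k + 1)).1)
        + (z * cmvZeta (k + 1) z / cmvZeta (k + 1 + 1) z) * (F z (k + 1)).2 := by
  obtain ⟨hgs, hhs, e1, e2⟩ := hF.2 z k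
  obtain ⟨hgs', hhs', e1', e2'⟩ := hF.2 z (k + 1)
  have hg : Summable (fun n : ℕ => α (k + 1 + n) * cmvZeta (k + 1 + n) z * (F z (k + 1 + n)).2) :=
    Summable.of_norm (by simpa using hgs)
  have hh : Summable (fun n : ℕ =>
      z ^ n * conj (α (k + 1 + n)) * cmvZeta (k + 1) z * (F z (k + 1 + n)).1) :=
    Summable.of_norm (by simpa using hhs)
  have hidx : ∀ n : ℕ, k + 1 + (n + 1) = k + 1 + 1 + n := fun n => by omega
  constructor
  · rw [e1, Summable.tsum_eq_zero_add hg]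
    have hsh : ∑' n : ℕ, α (k + 1 + (n + 1)) * cmvZeta (k + 1 + (n + 1)) z * (F z (k + 1 + (n + 1))).2
        = ∑' n : ℕ, α (k + 1 + 1 + n) * cmvZeta (k + 1 + 1 + n) z * (F z (k + 1 + 1 + n)).2 := by
      apply tsum_congr; intro n; rw [hidx n]
    rw [hsh, e1']
    simp only [Nat.add_zero]
    ring
  · rw [e2, Summable.tsum_eq_zero_add hh]
    have hsh : ∀ n : ℕ,
        z ^ (n + 1) * conj (α (k + 1 + (n + 1))) * cmvZeta (k + 1) z * (F z (k + 1 + (n + 1))).1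
        = (z * cmvZeta (k + 1) z / cmvZeta (k + 1 + 1) z) *
          (z ^ n * conj (α (k + 1 + 1 + n)) * cmvZeta (k + 1 + 1) z * (F z (k + 1 + 1 + n)).1) := by
      intro n
      rw [hidx n]
      have h2 : cmvZeta (k + 1 + 1) z ≠ 0 := cmvZeta_ne_zero hz0 _
      field_simp
      ring
    rw [tsum_congr hsh, tsum_mul_left]
    have hts : ∑' n : ℕ, z ^ n * conj (α (k + 1 + 1 + n)) * cmvZeta (k + 1 + 1) z *
        (F z (k + 1 + 1 + n)).1 = -(F z (k + 1)).2 := by rw [e2', neg_neg]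
    rw [hts]
    simp only [Nat.add_zero, pow_zero]
    ring

set_option maxHeartbeats 1000000 in
private lemma step_norm {α : ℕ → ℂ} {F : ℂ → ℕ → ℂ × ℂ} (hF : IsJostSolution α F)
    {z : ℂ} (hz : 1 ≤ ‖z‖) (k : ℕ) :
    enorm2 (F z k) ≤ ‖z‖ ^ 2 * (1 + ‖α (k + 1)‖) * enorm2 (F z (k + 1)) := by
  have hr0 : (0:ℝ) < ‖z‖ := lt_of_lt_of_le one_pos hz
  have hz0 : z ≠ 0 := by
    intro h; rw [h] at hz; simp at hz; linarith
  have habs_sub : ∀ u v : ℂ, ‖u - v‖ ≤ ‖u‖ + ‖v‖ := fun u v => by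
    exact norm_sub_le u v
  have habs_add : ∀ u v : ℂ, ‖u + v‖ ≤ ‖u‖ + ‖v‖ := fun u v => by
    exact norm_add_le u v
  have habs_neg : ∀ u : ℂ, ‖-u‖ = ‖u‖ := fun u => by
    exact norm_neg u
  obtain ⟨e1, e2⟩ := jost_step hF hz0 k
  set r := ‖z‖ with hr
  set t := ‖α (k + 1)‖ with htd
  set x := ‖(F z (k + 1)).1‖ with hx
  set y := ‖(F z (k + 1)).2‖ with hy
  have ht : 0 ≤ t := norm_nonneg _
  have hx0 : 0 ≤ x := norm_nonneg _
  have hy0 : 0 ≤ y := norm_nonneg _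
  have hr1 : (1:ℝ) ≤ r := hz
  have hr0' : (0:ℝ) ≤ r := le_of_lt hr0
  have h2' : (1:ℝ) ≤ r ^ 2 := by nlinarith
  have h4 : (1:ℝ) ≤ r ^ 4 := by nlinarith
  have hr14 : r ≤ r ^ 4 := by nlinarith
  have hr34 : r ^ 3 ≤ r ^ 4 := by nlinarith [mul_nonneg (mul_nonneg hr0' hr0') hr0']
  have h24 : r ^ 2 ≤ r ^ 4 := by nlinarith
  have key : ‖(F z k).1‖ ^ 2 + ‖(F z k).2‖ ^ 2
      ≤ (r ^ 2 * (1 + t)) ^ 2 * (x ^ 2 + y ^ 2) := by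
    rcases Nat.even_or_odd (k + 1) with hpar | hpar
    · -- k+1 even : ζ = 1, w = z*1/z = 1
      have hz1 : cmvZeta (k + 1) z = 1 := by
        unfold cmvZeta; rw [if_neg]; rw [Nat.odd_iff]; rw [Nat.even_iff] at hpar; omega
      have hz2 : cmvZeta (k + 1 + 1) z = z := by
        unfold cmvZeta; rw [if_pos]; rw [Nat.odd_iff]; rw [Nat.even_iff] at hpar; omega
      rw [hz1] at e1 e2; rw [hz2] at e2
      have hw : z * 1 / z = 1 := by field_simp
      rw [hw] at e2
      have hu : ‖(F z k).1‖ ≤ x + t * y := by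
        rw [e1]
        refine (habs_sub _ _).trans ?_
        rw [norm_mul, norm_mul, norm_one, mul_one]
      have hv : ‖(F z k).2‖ ≤ t * x + y := by
        rw [e2]
        refine (habs_add _ _).trans ?_
        rw [habs_neg, norm_mul, norm_mul, norm_one, mul_one, Complex.norm_conj, one_mul]
      have h1 : ‖(F z k).1‖ ^ 2 ≤ (x + t * y) ^ 2 :=
        pow_le_pow_left₀ (norm_nonneg _) hu 2
      have h2 : ‖(F z k).2‖ ^ 2 ≤ (t * x + y) ^ 2 :=
        pow_le_pow_left₀ (norm_nonneg _) hv 2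
      have hpoly : (x + t * y) ^ 2 + (t * x + y) ^ 2 ≤ (r ^ 2 * (1 + t)) ^ 2 * (x ^ 2 + y ^ 2) := by
        nlinarith [mul_nonneg ht (sq_nonneg (x - y)), sq_nonneg (x - y),
          mul_nonneg (mul_nonneg ht ht) (sq_nonneg x), mul_nonneg (mul_nonneg ht ht) (sq_nonneg y),
          mul_nonneg ht (sq_nonneg x), mul_nonneg ht (sq_nonneg y),
          mul_nonneg (sub_nonneg.2 h4) (add_nonneg (sq_nonneg x) (sq_nonneg y)),
          mul_nonneg (mul_nonneg (sub_nonneg.2 h4) ht) (add_nonneg (sq_nonneg x) (sq_nonneg y)),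
          mul_nonneg (mul_nonneg (mul_nonneg (sub_nonneg.2 h4) ht) ht)
            (add_nonneg (sq_nonneg x) (sq_nonneg y))]
      linarith
    · -- k+1 odd : ζ = z, w = z*z/1 = z²
      have hz1 : cmvZeta (k + 1) z = z := by
        unfold cmvZeta; rw [if_pos hpar]
      have hz2 : cmvZeta (k + 1 + 1) z = 1 := by
        unfold cmvZeta; rw [if_neg]; rw [Nat.odd_iff] at *; omega
      rw [hz1] at e1 e2; rw [hz2] at e2
      have hw : z * z / 1 = z * z := by field_simp
      rw [hw] at e2
      have hu : ‖(F z k).1‖ ≤ x + t * r * y := by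
        rw [e1]
        refine (habs_sub _ _).trans ?_
        rw [norm_mul, norm_mul]
      have hv : ‖(F z k).2‖ ≤ t * r * x + r * r * y := by
        rw [e2]
        refine (habs_add _ _).trans ?_
        rw [habs_neg, norm_mul, norm_mul, norm_mul, norm_mul, Complex.norm_conj]
      have h1 : ‖(F z k).1‖ ^ 2 ≤ (x + t * r * y) ^ 2 :=
        pow_le_pow_left₀ (norm_nonneg _) hu 2
      have h2 : ‖(F z k).2‖ ^ 2 ≤ (t * r * x + r * r * y) ^ 2 :=
        pow_le_pow_left₀ (norm_nonneg _) hv 2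
      have hpoly : (x + t * r * y) ^ 2 + (t * r * x + r * r * y) ^ 2
          ≤ (r ^ 2 * (1 + t)) ^ 2 * (x ^ 2 + y ^ 2) := by
        nlinarith [mul_nonneg (mul_nonneg ht hr0') (sq_nonneg (x - y)),
          mul_nonneg (mul_nonneg ht (pow_nonneg hr0' 3)) (sq_nonneg (x - y)),
          mul_nonneg (mul_nonneg ht (sub_nonneg.2 hr14)) (add_nonneg (sq_nonneg x) (sq_nonneg y)),
          mul_nonneg (mul_nonneg ht (sub_nonneg.2 hr34)) (add_nonneg (sq_nonneg x) (sq_nonneg y)),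
          mul_nonneg (mul_nonneg (mul_nonneg ht ht) (sub_nonneg.2 h24))
            (add_nonneg (sq_nonneg x) (sq_nonneg y)),
          mul_nonneg (sub_nonneg.2 h4) (sq_nonneg x)]
      linarith
  have hc0 : (0:ℝ) ≤ r ^ 2 * (1 + t) := by positivity
  calc enorm2 (F z k) = Real.sqrt (‖(F z k).1‖ ^ 2 + ‖(F z k).2‖ ^ 2) := rfl
    _ ≤ Real.sqrt ((r ^ 2 * (1 + t)) ^ 2 * (x ^ 2 + y ^ 2)) := Real.sqrt_le_sqrt key
    _ = (r ^ 2 * (1 + t)) * Real.sqrt (x ^ 2 + y ^ 2) := by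
        rw [Real.sqrt_mul (sq_nonneg _), Real.sqrt_sq hc0]
    _ = r ^ 2 * (1 + t) * enorm2 (F z (k + 1)) := rfl

private lemma iterate_norm {α : ℕ → ℂ} {F : ℂ → ℕ → ℂ × ℂ} (hF : IsJostSolution α F)
    {z : ℂ} (hz : 1 ≤ ‖z‖) (k : ℕ) :
    enorm2 (F z 0) ≤ (‖z‖ ^ 2) ^ k *
      (∏ i ∈ Finset.range k, (1 + ‖α (i + 1)‖)) * enorm2 (F z k) := by
  induction k with
  | zero => simp
  | succ k ih =>
    have hstep := step_norm hF hz k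
    have hc : (0:ℝ) ≤ (‖z‖ ^ 2) ^ k * ∏ i ∈ Finset.range k, (1 + ‖α (i + 1)‖) := by
      positivity
    calc enorm2 (F z 0)
        ≤ (‖z‖ ^ 2) ^ k * (∏ i ∈ Finset.range k, (1 + ‖α (i + 1)‖)) *
          enorm2 (F z k) := ih
      _ ≤ (‖z‖ ^ 2) ^ k * (∏ i ∈ Finset.range k, (1 + ‖α (i + 1)‖)) *
          (‖z‖ ^ 2 * (1 + ‖α (k + 1)‖) * enorm2 (F z (k + 1))) := by
          rw [mul_assoc ((‖z‖ ^ 2) ^ k) _ _, mul_assoc ((‖z‖ ^ 2) ^ k) _ _] at *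
          exact mul_le_mul_of_nonneg_left (by
            exact mul_le_mul_of_nonneg_left hstep (by positivity)) (by positivity)
      _ = (‖z‖ ^ 2) ^ (k + 1) *
          (∏ i ∈ Finset.range (k + 1), (1 + ‖α (i + 1)‖)) * enorm2 (F z (k + 1)) := by
          rw [Finset.prod_range_succ, pow_succ]; ring

private lemma jost_tail {α : ℕ → ℂ} {F : ℂ → ℕ → ℂ × ℂ} (hF : IsJostSolution α F)
    {z : ℂ} (hz : 1 ≤ ‖z‖) {C : ℝ} (hC0 : 0 ≤ C) (k : ℕ)
    (hcoef : ∀ n : ℕ, k < n → ‖α n‖ * ‖z‖ ^ (n - k) ≤ C * (1 / 2) ^ n) :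
    enorm2 (F z k) ≤ 1 + ∑' m : ℕ, (C * (1 / 2) ^ (k + 1 + m)) * enorm2 (F z (k + 1 + m)) := by
  obtain ⟨M, hM⟩ := hF.1 z
  have hM0 : 0 ≤ M := le_trans (Real.sqrt_nonneg _) (hM 0)
  obtain ⟨hgs, hhs, e1, e2⟩ := hF.2 z k
  set G : ℕ → ℝ := fun m => ‖α (k + 1 + m) * cmvZeta (k + 1 + m) z * (F z (k + 1 + m)).2‖
    with hGdef
  set H : ℕ → ℝ := fun m =>
    ‖z ^ m * conj (α (k + 1 + m)) * cmvZeta (k + 1) z * (F z (k + 1 + m)).1‖ with hHdef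
  have hG0 : ∀ m, 0 ≤ G m := fun m => norm_nonneg _
  have hH0 : ∀ m, 0 ≤ H m := fun m => norm_nonneg _
  -- termwise bound
  have hterm : ∀ m : ℕ, Real.sqrt (G m ^ 2 + H m ^ 2)
      ≤ (C * (1 / 2) ^ (k + 1 + m)) * enorm2 (F z (k + 1 + m)) := by
    intro m
    set n := k + 1 + m with hn
    have hkn : k < n := by omega
    have hd0 : 0 ≤ C * (1 / 2 : ℝ) ^ n := by positivity
    have hcf := hcoef n hkn
    have hrm : ‖z‖ ≤ ‖z‖ ^ (n - k) := by
      calc ‖z‖ = ‖z‖ ^ 1 := (pow_one _).symm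
        _ ≤ ‖z‖ ^ (n - k) := pow_le_pow_right₀ hz (by omega)
    have hGm : G m ≤ (C * (1 / 2) ^ n) * ‖(F z n).2‖ := by
      show ‖_‖ ≤ _
      rw [norm_mul, norm_mul]
      have h1 : ‖α n‖ * ‖cmvZeta n z‖ ≤ C * (1 / 2) ^ n := by
        calc ‖α n‖ * ‖cmvZeta n z‖
            ≤ ‖α n‖ * ‖z‖ :=
              mul_le_mul_of_nonneg_left (cmvZeta_abs_le hz n) (norm_nonneg _)
          _ ≤ ‖α n‖ * ‖z‖ ^ (n - k) :=
              mul_le_mul_of_nonneg_left hrm (norm_nonneg _)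
          _ ≤ C * (1 / 2) ^ n := hcf
      exact mul_le_mul_of_nonneg_right h1 (norm_nonneg _)
    have hHm : H m ≤ (C * (1 / 2) ^ n) * ‖(F z n).1‖ := by
      show ‖_‖ ≤ _
      rw [norm_mul, norm_mul, norm_mul, norm_pow, Complex.norm_conj]
      have h1 : ‖z‖ ^ m * ‖α n‖ * ‖cmvZeta (k + 1) z‖
          ≤ C * (1 / 2) ^ n := by
        calc ‖z‖ ^ m * ‖α n‖ * ‖cmvZeta (k + 1) z‖
            ≤ ‖z‖ ^ m * ‖α n‖ * ‖z‖ := by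
              apply mul_le_mul_of_nonneg_left (cmvZeta_abs_le hz _)
              positivity
          _ = ‖α n‖ * ‖z‖ ^ (m + 1) := by rw [pow_succ]; ring
          _ = ‖α n‖ * ‖z‖ ^ (n - k) := by
              have hnk : n - k = m + 1 := by omega
              rw [hnk]
          _ ≤ C * (1 / 2) ^ n := hcf
      exact mul_le_mul_of_nonneg_right h1 (norm_nonneg _)
    have hsq : G m ^ 2 + H m ^ 2 ≤ (C * (1 / 2) ^ n) ^ 2 *
        (‖(F z n).1‖ ^ 2 + ‖(F z n).2‖ ^ 2) := by
      have g2 := pow_le_pow_left₀ (hG0 m) hGm 2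
      have h2 := pow_le_pow_left₀ (hH0 m) hHm 2
      nlinarith [g2, h2]
    calc Real.sqrt (G m ^ 2 + H m ^ 2)
        ≤ Real.sqrt ((C * (1 / 2) ^ n) ^ 2 *
          (‖(F z n).1‖ ^ 2 + ‖(F z n).2‖ ^ 2)) := Real.sqrt_le_sqrt hsq
      _ = (C * (1 / 2) ^ n) *
          Real.sqrt (‖(F z n).1‖ ^ 2 + ‖(F z n).2‖ ^ 2) := by
          rw [Real.sqrt_mul (sq_nonneg _), Real.sqrt_sq hd0]
      _ = (C * (1 / 2) ^ n) * enorm2 (F z n) := rfl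
  -- summabilities
  have hsqrt_summ : Summable (fun m => Real.sqrt (G m ^ 2 + H m ^ 2)) := by
    apply Summable.of_nonneg_of_le (fun m => Real.sqrt_nonneg _) (fun m => ?_) (hgs.add hhs)
    have h1 : G m ^ 2 + H m ^ 2 ≤ (G m + H m) ^ 2 := by nlinarith [mul_nonneg (hG0 m) (hH0 m)]
    calc Real.sqrt (G m ^ 2 + H m ^ 2) ≤ Real.sqrt ((G m + H m) ^ 2) := Real.sqrt_le_sqrt h1
      _ = G m + H m := Real.sqrt_sq (add_nonneg (hG0 m) (hH0 m))
  have hdN_summ : Summable (fun m => (C * (1 / 2) ^ (k + 1 + m)) * enorm2 (F z (k + 1 + m))) := by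
    have hE0 : ∀ j : ℕ, 0 ≤ enorm2 (F z j) := fun j => Real.sqrt_nonneg _
    apply Summable.of_nonneg_of_le (fun m => mul_nonneg (by positivity) (hE0 _)) (fun m => ?_)
      ((summable_geometric_two.mul_left (C * (1/2)^(k+1) * M)))
    calc (C * (1 / 2) ^ (k + 1 + m)) * enorm2 (F z (k + 1 + m))
        ≤ (C * (1 / 2) ^ (k + 1 + m)) * M := by
          apply mul_le_mul_of_nonneg_left (hM _) (by positivity)
      _ = C * (1/2)^(k+1) * M * (1/2)^m := by rw [pow_add]; ring
  -- the main estimate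
  have hx1 : ‖(F z k).1‖ ≤ 1 + ∑' m, G m := by
    rw [e1]
    calc ‖1 - ∑' n : ℕ, α (k + 1 + n) * cmvZeta (k + 1 + n) z * (F z (k + 1 + n)).2‖
        ≤ ‖(1:ℂ)‖ +
          ‖∑' n : ℕ, α (k + 1 + n) * cmvZeta (k + 1 + n) z * (F z (k + 1 + n)).2‖ := by
          exact norm_sub_le _ _
      _ ≤ 1 + ∑' m, G m := by
          rw [norm_one]
          gcongr
          exact norm_tsum_le_tsum_norm hgs
  have hx2 : ‖(F z k).2‖ ≤ ∑' m, H m := by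
    rw [e2]
    rw [norm_neg]
    exact norm_tsum_le_tsum_norm hhs
  have hA0 : 0 ≤ ∑' m, G m := tsum_nonneg hG0
  have hB0 : 0 ≤ ∑' m, H m := tsum_nonneg hH0
  calc enorm2 (F z k) = Real.sqrt (‖(F z k).1‖ ^ 2 + ‖(F z k).2‖ ^ 2) := rfl
    _ ≤ Real.sqrt ((1 + ∑' m, G m) ^ 2 + (∑' m, H m) ^ 2) := by
        apply Real.sqrt_le_sqrt
        have := pow_le_pow_left₀ (norm_nonneg (F z k).1) hx1 2
        have := pow_le_pow_left₀ (norm_nonneg (F z k).2) hx2 2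
        linarith
    _ ≤ 1 + Real.sqrt ((∑' m, G m) ^ 2 + (∑' m, H m) ^ 2) := sqrt_shift hA0 hB0
    _ ≤ 1 + ∑' m, Real.sqrt (G m ^ 2 + H m ^ 2) := by
        have := minkowski_tsum hG0 hH0 hgs hhs
        linarith
    _ ≤ 1 + ∑' m : ℕ, (C * (1 / 2) ^ (k + 1 + m)) * enorm2 (F z (k + 1 + m)) := by
        have := Summable.tsum_le_tsum hterm hsqrt_summ hdN_summ
        linarith


private lemma gronwall (N Q d : ℕ → ℝ) (K : ℕ) (M : ℝ)
    (hN0 : ∀ k, 0 ≤ N k) (hNM : ∀ k, N k ≤ M)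
    (hd0 : ∀ n, 0 ≤ d n) (hdsum : Summable d)
    (hQ1 : ∀ k, 1 ≤ Q k) (Qb : ℝ) (hQb : ∀ k, Q k ≤ Qb)
    (htel : ∀ k, K ≤ k → ∑' m, d (k + 1 + m) * Q (k + 1 + m) ≤ Q k - 1)
    (k₀ : ℕ) (hk₀K : K ≤ k₀) (hsmall : ∀ k, k₀ ≤ k → ∑' m, d (k + 1 + m) ≤ 1 / 2)
    (hineq : ∀ k, K ≤ k → N k ≤ 1 + ∑' m, d (k + 1 + m) * N (k + 1 + m)) :
    N K ≤ Q K := by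
  have hM0 : 0 ≤ M := le_trans (hN0 0) (hNM 0)
  have hsd : ∀ k : ℕ, Summable (fun m => d (k + 1 + m)) := by
    intro k
    have h1 : Summable (fun m => d (m + (k + 1))) := (summable_nat_add_iff (k + 1)).mpr hdsum
    exact h1.congr (fun m => by rw [add_comm])
  have hsdN : ∀ k : ℕ, Summable (fun m => d (k + 1 + m) * N (k + 1 + m)) := by
    intro k
    apply Summable.of_nonneg_of_le (fun m => mul_nonneg (hd0 _) (hN0 _)) (fun m => ?_)
      ((hsd k).mul_right M)
    exact mul_le_mul_of_nonneg_left (hNM _) (hd0 _)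
  have hsdQ : ∀ k : ℕ, Summable (fun m => d (k + 1 + m) * Q (k + 1 + m)) := by
    intro k
    apply Summable.of_nonneg_of_le
      (fun m => mul_nonneg (hd0 _) (le_trans zero_le_one (hQ1 _))) (fun m => ?_)
      ((hsd k).mul_right Qb)
    exact mul_le_mul_of_nonneg_left (hQb _) (hd0 _)
  set D := M + 1 with hD
  have hD0 : 0 < D := by linarith
  -- Stage A
  have stageA : ∀ j k, k₀ ≤ k → N k ≤ Q k + (1 / 2) ^ j * D := by
    intro j
    induction j with
    | zero =>
      intro k hk
      have := hQ1 k
      have := hNM k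
      simp only [pow_zero, one_mul]
      linarith
    | succ j ih =>
      intro k hk
      have hKk : K ≤ k := le_trans hk₀K hk
      have h1 : N k ≤ 1 + ∑' m, d (k + 1 + m) * N (k + 1 + m) := hineq k hKk
      have h2 : ∑' m, d (k + 1 + m) * N (k + 1 + m)
          ≤ ∑' m, (d (k + 1 + m) * Q (k + 1 + m) + d (k + 1 + m) * ((1 / 2) ^ j * D)) := by
        apply Summable.tsum_le_tsum (fun m => ?_) (hsdN k)
          (((hsdQ k).add (((hsd k).mul_right ((1/2)^j * D)))))
        have := ih (k + 1 + m) (by omega)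
        calc d (k + 1 + m) * N (k + 1 + m)
            ≤ d (k + 1 + m) * (Q (k + 1 + m) + (1 / 2) ^ j * D) :=
              mul_le_mul_of_nonneg_left this (hd0 _)
          _ = _ := by ring
      rw [Summable.tsum_add (hsdQ k) ((hsd k).mul_right _)] at h2
      have h3 : ∑' m, d (k + 1 + m) * Q (k + 1 + m) ≤ Q k - 1 := htel k hKk
      have h4 : ∑' m, d (k + 1 + m) * ((1 / 2) ^ j * D) = (∑' m, d (k + 1 + m)) * ((1/2)^j * D) :=
        tsum_mul_right
      have h5 : (∑' m, d (k + 1 + m)) * ((1/2)^j * D) ≤ (1/2) * ((1/2)^j * D) := by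
        apply mul_le_mul_of_nonneg_right (hsmall k hk) (by positivity)
      have : (1/2 : ℝ) * ((1/2)^j * D) = (1/2)^(j+1) * D := by ring
      rw [h4] at h2
      linarith [h2, h1, h3, h5]
  -- limit of stage A
  have limitA : ∀ k, k₀ ≤ k → N k ≤ Q k := by
    intro k hk
    apply le_of_forall_pos_le_add
    intro ε hε
    obtain ⟨j, hj⟩ := exists_pow_lt_of_lt_one (show (0:ℝ) < ε / D by positivity)
      (show (1/2 : ℝ) < 1 by norm_num)
    have h2 : (1/2:ℝ)^j * D < ε := by
      have := (lt_div_iff₀ hD0).mp hj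
      linarith
    have := stageA j k hk
    linarith
  -- Stage B : downward induction
  have stageB : ∀ j k, K ≤ k → k₀ ≤ k + j → N k ≤ Q k := by
    intro j
    induction j with
    | zero => intro k hK hk; exact limitA k (by omega)
    | succ j ih =>
      intro k hK hk
      by_cases hc : k₀ ≤ k
      · exact limitA k hc
      · have h1 : N k ≤ 1 + ∑' m, d (k + 1 + m) * N (k + 1 + m) := hineq k hK
        have h2 : ∑' m, d (k + 1 + m) * N (k + 1 + m) ≤ ∑' m, d (k + 1 + m) * Q (k + 1 + m) := by
          apply Summable.tsum_le_tsum (fun m => ?_) (hsdN k) (hsdQ k)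
          exact mul_le_mul_of_nonneg_left (ih (k + 1 + m) (by omega) (by omega)) (hd0 _)
        have h3 := htel k hK
        linarith
  exact stageB k₀ K le_rfl (by omega)

set_option maxHeartbeats 1000000 in
theorem jost_solution_growth (γ C : ℝ) (hγ : 1 < γ) (hC : 0 < C)
    (α : ℕ → ℂ) (hα : SuperExpDecay γ C α)
    (F : ℂ → ℕ → ℂ × ℂ) (hF : IsJostSolution α F)
    (z : ℂ) (hz : 1 ≤ ‖z‖) :
    enorm2 (F z 0) ≤
      Real.exp (C + 2 * (⌊(Real.log (2 * ‖z‖ ^ 2)) ^ ((1 : ℝ) / (γ - 1))⌋ : ℝ) *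
          Real.log (‖z‖)) *
        ∏' n : ℕ, (1 + ‖α (n + 1)‖) := by
  have hr0 : (0:ℝ) < ‖z‖ := lt_of_lt_of_le one_pos hz
  set r := ‖z‖ with hrdef
  set L := Real.log (2 * r ^ 2) with hLdef
  set x := L ^ ((1 : ℝ) / (γ - 1)) with hxdef
  have h2r2 : (1:ℝ) ≤ 2 * r ^ 2 := by nlinarith
  have h2r2pos : (0:ℝ) < 2 * r ^ 2 := by nlinarith
  have hL0 : 0 ≤ L := Real.log_nonneg h2r2
  have hx0 : 0 ≤ x := Real.rpow_nonneg hL0 _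
  set K := ⌊x⌋₊ with hKdef
  -- decay estimate beyond K
  have hα2 : ∀ n : ℕ, K < n → ‖α n‖ * r ^ (2 * n) ≤ C * (1 / 2) ^ n := by
    intro n hn
    have hn1 : 1 ≤ n := by omega
    have hnR : (1:ℝ) ≤ (n:ℝ) := by exact_mod_cast hn1
    have hnpos : (0:ℝ) < (n:ℝ) := by linarith
    have hxn : x < (n:ℝ) := (Nat.floor_lt hx0).mp hn
    have hLn : L < (n:ℝ) ^ (γ - 1 : ℝ) := by
      have hxx : x ^ (γ - 1 : ℝ) = L := by
        rw [hxdef, ← Real.rpow_mul hL0, one_div_mul_cancel (by linarith : γ - 1 ≠ 0),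
          Real.rpow_one]
      calc L = x ^ (γ - 1 : ℝ) := hxx.symm
        _ < (n:ℝ) ^ (γ - 1 : ℝ) := Real.rpow_lt_rpow hx0 hxn (by linarith)
    have hng : (n:ℝ) * L < (n:ℝ) ^ γ := by
      have h1 : (n:ℝ) ^ γ = (n:ℝ) * (n:ℝ) ^ (γ - 1 : ℝ) := by
        have h2 := Real.rpow_add hnpos 1 (γ - 1)
        rw [show (1:ℝ) + (γ - 1) = γ by ring] at h2
        rw [h2, Real.rpow_one]
      rw [h1]
      exact mul_lt_mul_of_pos_left hLn hnpos
    have hexp : Real.exp (-(n:ℝ) ^ γ) ≤ Real.exp (-((n:ℝ) * L)) :=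
      Real.exp_le_exp.mpr (by linarith)
    have hEnL : Real.exp ((n:ℝ) * L) = (2 * r ^ 2) ^ n := by
      rw [Real.exp_nat_mul, Real.exp_log h2r2pos]
    have hb := hα n hn1
    have hr2n : ((2 * r ^ 2) ^ n : ℝ) = 2 ^ n * r ^ (2 * n) := by rw [mul_pow, pow_mul]
    have hstep : ‖α n‖ ≤ C * (2 ^ n * r ^ (2 * n))⁻¹ := by
      calc ‖α n‖ ≤ C * Real.exp (-(n:ℝ) ^ γ) := hb
        _ ≤ C * Real.exp (-((n:ℝ) * L)) := mul_le_mul_of_nonneg_left hexp hC.le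
        _ = C * (2 ^ n * r ^ (2 * n))⁻¹ := by rw [Real.exp_neg, hEnL, hr2n]
    have hy : (0:ℝ) < r ^ (2 * n) := by positivity
    calc ‖α n‖ * r ^ (2 * n) ≤ (C * (2 ^ n * r ^ (2 * n))⁻¹) * r ^ (2 * n) :=
          mul_le_mul_of_nonneg_right hstep hy.le
      _ = C * (1 / 2) ^ n := by
          rw [one_div, inv_pow]
          field_simp
  -- summability of the Verblunsky coefficients
  have hsum1 : Summable (fun n : ℕ => ‖α (n + 1)‖) := by
    have hgeo : Summable (fun n : ℕ => (C * Real.exp (-1)) * Real.exp (-1) ^ n) := by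
      apply Summable.mul_left
      exact summable_geometric_of_lt_one (Real.exp_pos _).le
        (by rw [← Real.exp_zero]; exact Real.exp_lt_exp.mpr (by norm_num))
    apply Summable.of_nonneg_of_le (fun n => norm_nonneg _) (fun n => ?_) hgeo
    have h1 := hα (n + 1) (by omega)
    have hcast : (1:ℝ) ≤ ((n + 1 : ℕ) : ℝ) := by exact_mod_cast Nat.one_le_iff_ne_zero.mpr (by omega)
    have h2 : ((n + 1 : ℕ) : ℝ) ≤ ((n + 1 : ℕ) : ℝ) ^ γ := by
      calc ((n + 1 : ℕ) : ℝ) = ((n + 1 : ℕ) : ℝ) ^ (1:ℝ) := (Real.rpow_one _).symm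
        _ ≤ _ := Real.rpow_le_rpow_of_exponent_le hcast hγ.le
    have h3 : Real.exp (-((n + 1 : ℕ) : ℝ) ^ γ) ≤ Real.exp (-((n + 1 : ℕ) : ℝ)) :=
      Real.exp_le_exp.mpr (by linarith)
    have h4 : Real.exp (-((n + 1 : ℕ) : ℝ)) = Real.exp (-1) * Real.exp (-1) ^ n := by
      rw [show -((n + 1 : ℕ) : ℝ) = ((n + 1 : ℕ) : ℝ) * (-1) by push_cast; ring,
        Real.exp_nat_mul, pow_succ]
      ring
    calc ‖α (n + 1)‖ ≤ C * Real.exp (-((n + 1 : ℕ) : ℝ) ^ γ) := h1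
      _ ≤ C * Real.exp (-((n + 1 : ℕ) : ℝ)) := mul_le_mul_of_nonneg_left h3 hC.le
      _ = (C * Real.exp (-1)) * Real.exp (-1) ^ n := by rw [h4]; ring
  -- summability of logs of the product terms
  have hlog : Summable (fun n : ℕ => Real.log (1 + ‖α (n + 1)‖)) := by
    apply Summable.of_nonneg_of_le
      (fun n => Real.log_nonneg (le_add_of_nonneg_right (norm_nonneg _)))
      (fun n => ?_) hsum1
    have := Real.log_le_sub_one_of_pos (show (0:ℝ) < 1 + ‖α (n + 1)‖ by positivity)
    linarith
  obtain ⟨M, hM⟩ := hF.1 z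
  -- Gronwall setup (Q k = exp (C (1/2)^k), d n = C (1/2)^n)
  have hd0 : ∀ n : ℕ, 0 ≤ C * (1 / 2 : ℝ) ^ n := fun n => by positivity
  have hdsum : Summable (fun n : ℕ => C * (1 / 2 : ℝ) ^ n) := summable_geometric_two.mul_left C
  have hQ1 : ∀ k : ℕ, 1 ≤ Real.exp (C * (1 / 2 : ℝ) ^ k) := fun k => by
    have := Real.add_one_le_exp (C * (1 / 2 : ℝ) ^ k)
    have h0 : 0 ≤ C * (1 / 2 : ℝ) ^ k := by positivity
    linarith
  have hQb : ∀ k : ℕ, Real.exp (C * (1 / 2 : ℝ) ^ k) ≤ Real.exp C := fun k => by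
    apply Real.exp_le_exp.mpr
    calc C * (1 / 2 : ℝ) ^ k ≤ C * 1 := by
          apply mul_le_mul_of_nonneg_left _ hC.le
          exact pow_le_one₀ (by norm_num) (by norm_num)
      _ = C := mul_one C
  have htsum_d : ∀ k : ℕ, ∑' m : ℕ, C * (1 / 2 : ℝ) ^ (k + 1 + m) = C * (1 / 2) ^ k := by
    intro k
    have h1 : (fun m : ℕ => C * (1 / 2 : ℝ) ^ (k + 1 + m))
        = fun m : ℕ => (C * (1 / 2) ^ (k + 1)) * (1 / 2) ^ m := by
      funext m; rw [pow_add]; ring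
    rw [h1, tsum_mul_left, tsum_geometric_two, pow_succ]
    ring
  have htel : ∀ k : ℕ, K ≤ k →
      ∑' m : ℕ, (C * (1 / 2 : ℝ) ^ (k + 1 + m)) * Real.exp (C * (1 / 2) ^ (k + 1 + m))
        ≤ Real.exp (C * (1 / 2) ^ k) - 1 := by
    intro k _
    apply Real.tsum_le_of_sum_range_le
      (fun m => mul_nonneg (hd0 _) (le_trans zero_le_one (hQ1 _)))
    intro j
    have hterm : ∀ m : ℕ, (C * (1 / 2 : ℝ) ^ (k + 1 + m)) * Real.exp (C * (1 / 2) ^ (k + 1 + m))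
        ≤ Real.exp (C * (1 / 2) ^ (k + m)) - Real.exp (C * (1 / 2) ^ (k + m + 1)) := by
      intro m
      have hidx : k + m + 1 = k + 1 + m := by omega
      rw [hidx]
      have hQQQ : Real.exp (C * (1/2:ℝ) ^ (k + m))
          = Real.exp (C * (1/2) ^ (k+1+m)) * Real.exp (C * (1/2) ^ (k+1+m)) := by
        rw [← Real.exp_add]
        congr 1
        rw [show k + 1 + m = (k + m) + 1 by omega, pow_succ]
        ring
      rw [hQQQ]
      nlinarith [Real.add_one_le_exp (C * (1/2:ℝ) ^ (k+1+m)),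
        Real.exp_pos (C * (1/2:ℝ) ^ (k+1+m)),
        (by positivity : (0:ℝ) ≤ C * (1/2:ℝ) ^ (k+1+m))]
    calc ∑ m ∈ Finset.range j, (C * (1 / 2 : ℝ) ^ (k + 1 + m)) * Real.exp (C * (1/2) ^ (k + 1 + m))
        ≤ ∑ m ∈ Finset.range j,
            (Real.exp (C * (1/2:ℝ) ^ (k + m)) - Real.exp (C * (1/2) ^ (k + m + 1))) :=
          Finset.sum_le_sum fun m _ => hterm m
      _ = Real.exp (C * (1/2:ℝ) ^ (k + 0)) - Real.exp (C * (1/2) ^ (k + j)) :=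
          Finset.sum_range_sub' (fun m => Real.exp (C * (1/2:ℝ) ^ (k + m))) j
      _ ≤ Real.exp (C * (1/2:ℝ) ^ k) - 1 := by
          have := hQ1 (k + j)
          simp only [Nat.add_zero]
          linarith
  obtain ⟨j0, hj0⟩ := exists_pow_lt_of_lt_one (show (0:ℝ) < 1 / (2 * C) by positivity)
    (show (1/2 : ℝ) < 1 by norm_num)
  have hsmall : ∀ k, max K j0 ≤ k → ∑' m : ℕ, C * (1 / 2 : ℝ) ^ (k + 1 + m) ≤ 1 / 2 := by
    intro k hk
    rw [htsum_d k]
    have h1 : (1/2:ℝ) ^ k ≤ (1/2) ^ j0 :=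
      pow_le_pow_of_le_one (by norm_num) (by norm_num) (le_trans (le_max_right K j0) hk)
    have h2 : C * (1/2:ℝ)^k ≤ C * (1/2)^j0 := mul_le_mul_of_nonneg_left h1 hC.le
    have h3 : C * (1/2:ℝ)^j0 < C * (1 / (2 * C)) := mul_lt_mul_of_pos_left hj0 hC
    have h4 : C * (1 / (2 * C)) = 1 / 2 := by field_simp
    linarith
  have hineq : ∀ k, K ≤ k → enorm2 (F z k)
      ≤ 1 + ∑' m : ℕ, (C * (1 / 2 : ℝ) ^ (k + 1 + m)) * enorm2 (F z (k + 1 + m)) := by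
    intro k hk
    apply jost_tail hF hz hC.le k
    intro n hn
    have hKn : K < n := by omega
    have h1 : r ^ (n - k) ≤ r ^ (2 * n) := pow_le_pow_right₀ hz (by omega)
    calc ‖α n‖ * r ^ (n - k) ≤ ‖α n‖ * r ^ (2 * n) :=
          mul_le_mul_of_nonneg_left h1 (norm_nonneg _)
      _ ≤ C * (1 / 2) ^ n := hα2 n hKn
  have hNQ : enorm2 (F z K) ≤ Real.exp (C * (1 / 2 : ℝ) ^ K) :=
    gronwall (fun k => enorm2 (F z k)) (fun k => Real.exp (C * (1 / 2 : ℝ) ^ k))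
      (fun n => C * (1 / 2 : ℝ) ^ n) K M (fun k => Real.sqrt_nonneg _) hM hd0 hdsum
      hQ1 (Real.exp C) hQb htel (max K j0) (le_max_left _ _) hsmall hineq
  -- final assembly
  have hQKC : Real.exp (C * (1 / 2 : ℝ) ^ K) ≤ Real.exp C := hQb K
  have hiter := iterate_norm hF hz K
  set PF := ∏ i ∈ Finset.range K, (1 + ‖α (i + 1)‖) with hPFdef
  set PT := ∏' n : ℕ, (1 + ‖α (n + 1)‖) with hPTdef
  have hPF0 : 0 ≤ PF := Finset.prod_nonneg fun i _ => by positivity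
  have hPT : PT = Real.exp (∑' n : ℕ, Real.log (1 + ‖α (n + 1)‖)) := by
    have h := Real.rexp_tsum_eq_tprod (f := fun n => 1 + ‖α (n + 1)‖)
      (fun n => by positivity) hlog
    rw [hPTdef, ← h]
  have hPFe : PF = Real.exp (∑ i ∈ Finset.range K, Real.log (1 + ‖α (i + 1)‖)) := by
    rw [Real.exp_sum, hPFdef]
    refine Finset.prod_congr rfl fun i _ => ?_
    rw [Real.exp_log (by positivity)]
  have hPFPT : PF ≤ PT := by
    rw [hPFe, hPT]
    apply Real.exp_le_exp.mpr
    exact Summable.sum_le_tsum (Finset.range K)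
      (fun i _ => Real.log_nonneg (le_add_of_nonneg_right (norm_nonneg _))) hlog
  have hRHS : Real.exp (C + 2 * ((⌊x⌋ : ℤ) : ℝ) * Real.log r) = Real.exp C * (r ^ 2) ^ K := by
    rw [← natCast_floor_eq_intCast_floor hx0, Real.exp_add]
    congr 1
    have h1 : 2 * ((⌊x⌋₊ : ℕ) : ℝ) * Real.log r = ((2 * K : ℕ) : ℝ) * Real.log r := by
      push_cast [hKdef]; ring
    rw [h1, Real.exp_nat_mul, Real.exp_log hr0, pow_mul]
  rw [hRHS]
  have hchain : enorm2 (F z 0) ≤ (r ^ 2) ^ K * PF * Real.exp C := by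
    calc enorm2 (F z 0) ≤ (r ^ 2) ^ K * PF * enorm2 (F z K) := hiter
      _ ≤ (r ^ 2) ^ K * PF * Real.exp C := by
          apply mul_le_mul_of_nonneg_left (le_trans hNQ hQKC)
          positivity
  calc enorm2 (F z 0) ≤ (r ^ 2) ^ K * PF * Real.exp C := hchain
    _ ≤ (r ^ 2) ^ K * PT * Real.exp C := by
        apply mul_le_mul_of_nonneg_right _ (Real.exp_pos C).le
        exact mul_le_mul_of_nonneg_left hPFPT (by positivity)
    _ = Real.exp C * (r ^ 2) ^ K * PT := by ring
end

section
/- Let γ>1, C>0, Q>1, let α ∈ B₀(γ,C,Q), and let F be a Jost solution for α. Then for every z ∈ ℂ with |z| = 1, |F₁(z,0) − F₂(z,0)| ≥ ∏_{n=1}^∞ (1−|α_n|) ≥ 1/Q. -/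
open Complex Filter
open scoped ComplexConjugate Topology

noncomputable section JostAux

/-- Phase sequence used in the lower-bound argument. -/
def jostC (α : ℕ → ℂ) (z : ℂ) : ℕ → ℂ
  | 0 => 1
  | k + 1 => cmvZeta (k + 1) z * (α (k + 1) + jostC α z k * cmvZeta (k + 1) z) /
      (1 + jostC α z k * cmvZeta (k + 1) z * conj (α (k + 1)))

lemma one_sub_abs_le_abs_one_add (x : ℂ) : 1 - ‖x‖ ≤ ‖1 + x‖ := by
  have h : ‖1 + x + -x‖ ≤ ‖1 + x‖ + ‖-x‖ :=
    norm_add_le _ _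
  simp only [add_neg_cancel_right, norm_one, norm_neg] at h
  linarith

end JostAux

set_option maxHeartbeats 2000000 in
theorem jost_function_lower_bound (γ C Q : ℝ) (hγ : 1 < γ) (hC : 0 < C) (hQ : 1 < Q)
    (α : ℕ → ℂ) (hα : MemB0 γ C Q α)
    (F : ℂ → ℕ → ℂ × ℂ) (hF : IsJostSolution α F)
    (z : ℂ) (hz : ‖z‖ = 1) :
    (∏' n : ℕ, (1 - ‖α (n + 1)‖)) ≤ ‖(F z 0).1 - (F z 0).2‖ ∧
    1 / Q ≤ ∏' n : ℕ, (1 - ‖α (n + 1)‖) := by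
  obtain ⟨hα1, hαdec, hαQ⟩ := hα
  set a : ℕ → ℝ := fun n => ‖α n‖ with ha_def
  have ha_nonneg : ∀ n, 0 ≤ a n := fun n => norm_nonneg _
  have ha_lt : ∀ n, a (n + 1) < 1 := fun n => hα1 (n + 1) (by omega)
  -- summability of |α|
  have hr1 : Real.exp (-1) < 1 := by
    rw [Real.exp_lt_one_iff]; norm_num
  have hsum : Summable a := by
    rw [← summable_nat_add_iff 1]
    have hgeo : Summable (fun n : ℕ => C * Real.exp (-1) ^ n) :=
      (summable_geometric_of_lt_one (Real.exp_pos (-1)).le hr1).mul_left C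
    refine Summable.of_nonneg_of_le (fun n => ha_nonneg _) (fun n => ?_) hgeo
    have h1 : ((n : ℝ) + 1) ≤ ((n : ℝ) + 1) ^ γ := by
      have hx : (1 : ℝ) ≤ (n : ℝ) + 1 := by
        have h0 : (0 : ℝ) ≤ (n : ℝ) := Nat.cast_nonneg n
        linarith
      have h := Real.rpow_le_rpow_of_exponent_le hx hγ.le
      rwa [Real.rpow_one] at h
    have h2 : a (n + 1) ≤ C * Real.exp (-(((n : ℕ) + 1 : ℕ) : ℝ) ^ γ) := hαdec (n + 1) (by omega)
    have h3 : Real.exp (-(((n : ℕ) + 1 : ℕ) : ℝ) ^ γ) ≤ Real.exp (-((n : ℝ) + 1)) := by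
      apply Real.exp_le_exp.2
      push_cast
      linarith
    have h4 : Real.exp (-((n : ℝ) + 1)) = Real.exp (-1) ^ (n + 1) := by
      rw [← Real.exp_nat_mul]
      push_cast
      ring_nf
    have h5 : Real.exp (-1) ^ (n + 1) ≤ Real.exp (-1) ^ n := by
      apply pow_le_pow_of_le_one (Real.exp_pos _).le hr1.le
      omega
    calc a (n + 1) ≤ C * Real.exp (-(((n : ℕ) + 1 : ℕ) : ℝ) ^ γ) := h2
      _ ≤ C * Real.exp (-((n : ℝ) + 1)) := by
          exact mul_le_mul_of_nonneg_left h3 hC.le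
      _ = C * Real.exp (-1) ^ (n + 1) := by rw [h4]
      _ ≤ C * Real.exp (-1) ^ n := mul_le_mul_of_nonneg_left h5 hC.le
  have hsum_tail : ∀ m : ℕ, Summable (fun n => a (m + 1 + n)) := by
    intro m
    have := (summable_nat_add_iff (f := a) (m + 1)).2 hsum
    exact this.congr fun n => by rw [add_comm]
  -- bound on F
  obtain ⟨M, hM⟩ := hF.1 z
  have hM1 : ∀ k, ‖(F z k).1‖ ≤ M := by
    intro k
    have hMk := hM k
    simp only [enorm2] at hMk
    have h : Real.sqrt (‖(F z k).1‖ ^ 2) ≤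
        Real.sqrt (‖(F z k).1‖ ^ 2 + ‖(F z k).2‖ ^ 2) :=
      Real.sqrt_le_sqrt (by nlinarith [sq_nonneg (‖(F z k).2‖)])
    rw [Real.sqrt_sq (norm_nonneg _)] at h
    exact h.trans hMk
  have hM2 : ∀ k, ‖(F z k).2‖ ≤ M := by
    intro k
    have hMk := hM k
    simp only [enorm2] at hMk
    have h : Real.sqrt (‖(F z k).2‖ ^ 2) ≤
        Real.sqrt (‖(F z k).1‖ ^ 2 + ‖(F z k).2‖ ^ 2) :=
      Real.sqrt_le_sqrt (by nlinarith [sq_nonneg (‖(F z k).1‖)])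
    rw [Real.sqrt_sq (norm_nonneg _)] at h
    exact h.trans hMk
  have hFeq := hF.2
  -- |zeta| = 1
  have habsζ : ∀ m, ‖cmvZeta m z‖ = 1 := by
    intro m
    simp only [cmvZeta]
    split_ifs <;> simp [hz]
  -- summability of the series themselves
  have hS1 : ∀ k, Summable (fun n : ℕ => α (k + 1 + n) * cmvZeta (k + 1 + n) z *
      (F z (k + 1 + n)).2) := by
    intro k
    refine Summable.of_norm ?_
    exact (hFeq z k).1
  have hS2 : ∀ k, Summable (fun n : ℕ => z ^ n * conj (α (k + 1 + n)) * cmvZeta (k + 1) z *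
      (F z (k + 1 + n)).1) := by
    intro k
    refine Summable.of_norm ?_
    exact (hFeq z k).2.1
  -- first recurrence
  have rec1 : ∀ k, (F z k).1 = (F z (k + 1)).1 - α (k + 1) * cmvZeta (k + 1) z *
      (F z (k + 1)).2 := by
    intro k
    have e0 := (hFeq z k).2.2.1
    have e1 := (hFeq z (k + 1)).2.2.1
    rw [Summable.tsum_eq_zero_add (hS1 k)] at e0
    have hshift : (fun n : ℕ => α (k + 1 + (n + 1)) * cmvZeta (k + 1 + (n + 1)) z *
        (F z (k + 1 + (n + 1))).2) = (fun n : ℕ => α (k + 1 + 1 + n) * cmvZeta (k + 1 + 1 + n) z *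
        (F z (k + 1 + 1 + n)).2) := by
      funext n
      have h : k + 1 + (n + 1) = k + 1 + 1 + n := by omega
      rw [h]
    rw [hshift] at e0
    have hT : ∑' n : ℕ, α (k + 1 + 1 + n) * cmvZeta (k + 1 + 1 + n) z * (F z (k + 1 + 1 + n)).2
        = 1 - (F z (k + 1)).1 := by rw [e1]; ring
    rw [hT] at e0
    rw [e0]
    simp only [add_zero]
    ring
  -- the zeta identity
  have hzz : ∀ k, z * cmvZeta (k + 1) z = cmvZeta (k + 1) z ^ 2 * cmvZeta (k + 1 + 1) z := by
    intro k
    rcases Nat.even_or_odd k with hk | hk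
    · have h1 : Odd (k + 1) := Even.add_one hk
      have h2 : ¬ Odd (k + 1 + 1) := by simp [Nat.odd_add_one, h1]
      simp [cmvZeta, h1, h2]
      ring
    · have h1 : ¬ Odd (k + 1) := by simp [Nat.odd_add_one, hk]
      have h2 : Odd (k + 1 + 1) := by
        rw [Nat.odd_add_one]
        simpa [Nat.even_add_one] using h1
      simp [cmvZeta, h1, h2]
  -- second recurrence
  have rec2 : ∀ k, (F z k).2 = cmvZeta (k + 1) z ^ 2 * (F z (k + 1)).2 -
      cmvZeta (k + 1) z * conj (α (k + 1)) * (F z (k + 1)).1 := by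
    intro k
    have e0 := (hFeq z k).2.2.2
    have e1 := (hFeq z (k + 1)).2.2.2
    rw [Summable.tsum_eq_zero_add (hS2 k)] at e0
    have hshift : (fun n : ℕ => z ^ (n + 1) * conj (α (k + 1 + (n + 1))) * cmvZeta (k + 1) z *
        (F z (k + 1 + (n + 1))).1) = (fun n : ℕ => cmvZeta (k + 1) z ^ 2 *
        (z ^ n * conj (α (k + 1 + 1 + n)) * cmvZeta (k + 1 + 1) z * (F z (k + 1 + 1 + n)).1)) := by
      funext n
      have h : k + 1 + (n + 1) = k + 1 + 1 + n := by omega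
      rw [h, pow_succ]
      linear_combination (z ^ n * conj (α (k + 1 + 1 + n)) * (F z (k + 1 + 1 + n)).1) * hzz k
    rw [hshift, tsum_mul_left] at e0
    have hT : ∑' n : ℕ, z ^ n * conj (α (k + 1 + 1 + n)) * cmvZeta (k + 1 + 1) z *
        (F z (k + 1 + 1 + n)).1 = -(F z (k + 1)).2 := by rw [e1, neg_neg]
    rw [hT] at e0
    rw [e0]
    simp only [pow_zero, one_mul, add_zero]
    ring
  -- the phase sequence has modulus 1 and nonzero denominators
  have habs_c : ∀ k, ‖jostC α z k‖ = 1 := by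
    intro k
    induction k with
    | zero => simp [jostC]
    | succ k ih =>
      set w := jostC α z k * cmvZeta (k + 1) z with hw
      have habsw : ‖w‖ = 1 := by rw [hw, norm_mul, ih, habsζ, mul_one]
      have hww : w * conj w = 1 := by
        rw [Complex.mul_conj]
        norm_cast
        rw [← Complex.sq_norm, habsw]
        norm_num
      have key : ‖α (k + 1) + w‖ = ‖1 + w * conj (α (k + 1))‖ := by
        have h1 : α (k + 1) + w = w * (1 + conj w * α (k + 1)) := by
          linear_combination (-(α (k + 1))) * hww
        rw [h1, norm_mul, habsw, one_mul, ← Complex.norm_conj (1 + conj w * α (k + 1))]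
        congr 1
        simp [mul_comm]
      have habs_den : ‖w * conj (α (k + 1))‖ = a (k + 1) := by
        rw [norm_mul, habsw, one_mul, Complex.norm_conj]
      have hpos : 0 < ‖1 + w * conj (α (k + 1))‖ := by
        have h1 := one_sub_abs_le_abs_one_add (w * conj (α (k + 1)))
        rw [habs_den] at h1
        linarith [ha_lt k]
      show ‖cmvZeta (k + 1) z * (α (k + 1) + w) / (1 + w * conj (α (k + 1)))‖ = 1
      rw [norm_div, norm_mul, habsζ, one_mul, key, div_self hpos.ne']
  have hden_pos : ∀ k, 0 < ‖1 + jostC α z k * cmvZeta (k + 1) z *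
      conj (α (k + 1))‖ := by
    intro k
    have habs_den : ‖jostC α z k * cmvZeta (k + 1) z * conj (α (k + 1))‖ =
        a (k + 1) := by
      rw [norm_mul, norm_mul, habs_c, habsζ, Complex.norm_conj, one_mul, one_mul]
    have h1 := one_sub_abs_le_abs_one_add (jostC α z k * cmvZeta (k + 1) z * conj (α (k + 1)))
    rw [habs_den] at h1
    linarith [ha_lt k]
  have hden_ne : ∀ k, (1 + jostC α z k * cmvZeta (k + 1) z * conj (α (k + 1))) ≠ 0 := by
    intro k h
    have := hden_pos k
    rw [h] at this
    simp at this
  -- the key quantity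
  set D : ℕ → ℂ := fun k => (F z k).1 - jostC α z k * (F z k).2 with hD_def
  have hcdef : ∀ k, jostC α z (k + 1) * (1 + jostC α z k * cmvZeta (k + 1) z * conj (α (k + 1)))
      = cmvZeta (k + 1) z * (α (k + 1) + jostC α z k * cmvZeta (k + 1) z) := by
    intro k
    have : jostC α z (k + 1) = cmvZeta (k + 1) z * (α (k + 1) + jostC α z k * cmvZeta (k + 1) z) /
        (1 + jostC α z k * cmvZeta (k + 1) z * conj (α (k + 1))) := rfl
    rw [this, div_mul_cancel₀ _ (hden_ne k)]
  have hstep : ∀ k, D k = (1 + jostC α z k * cmvZeta (k + 1) z * conj (α (k + 1))) * D (k + 1) := by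
    intro k
    show (F z k).1 - jostC α z k * (F z k).2 = _ * ((F z (k + 1)).1 - jostC α z (k + 1) *
      (F z (k + 1)).2)
    rw [rec1 k, rec2 k]
    linear_combination ((F z (k + 1)).2) * hcdef k
  have hstep_abs : ∀ k, (1 - a (k + 1)) * ‖D (k + 1)‖ ≤ ‖D k‖ := by
    intro k
    rw [hstep k, norm_mul]
    apply mul_le_mul_of_nonneg_right _ (norm_nonneg _)
    have habs_den : ‖jostC α z k * cmvZeta (k + 1) z * conj (α (k + 1))‖ =
        a (k + 1) := by
      rw [norm_mul, norm_mul, habs_c, habsζ, Complex.norm_conj, one_mul, one_mul]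
    have h1 := one_sub_abs_le_abs_one_add (jostC α z k * cmvZeta (k + 1) z * conj (α (k + 1)))
    rw [habs_den] at h1
    exact h1
  have hprod_nonneg : ∀ m, 0 ≤ ∏ j ∈ Finset.range m, (1 - a (j + 1)) := by
    intro m
    apply Finset.prod_nonneg
    intro j _
    linarith [ha_lt j]
  have hind : ∀ m, (∏ j ∈ Finset.range m, (1 - a (j + 1))) * ‖D m‖ ≤
      ‖D 0‖ := by
    intro m
    induction m with
    | zero => simp
    | succ m ih =>
      rw [Finset.prod_range_succ]
      calc (∏ j ∈ Finset.range m, (1 - a (j + 1))) * (1 - a (m + 1)) * ‖D (m + 1)‖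
          = (∏ j ∈ Finset.range m, (1 - a (j + 1))) * ((1 - a (m + 1)) * ‖D (m + 1)‖)
            := by ring
        _ ≤ (∏ j ∈ Finset.range m, (1 - a (j + 1))) * ‖D m‖ :=
            mul_le_mul_of_nonneg_left (hstep_abs m) (hprod_nonneg m)
        _ ≤ ‖D 0‖ := ih
  -- tail sums tend to zero
  set T : ℕ → ℝ := fun m => ∑' n, a (m + 1 + n) with hT_def
  have hT_nonneg : ∀ m, 0 ≤ T m := fun m => tsum_nonneg fun n => ha_nonneg _
  have hT0 : Tendsto T atTop (𝓝 0) := by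
    have h1 : Tendsto (fun m : ℕ => ∑' n, a (n + m)) atTop (𝓝 0) := tendsto_sum_nat_add a
    have h2 : Tendsto (fun m : ℕ => ∑' n, a (n + (m + 1))) atTop (𝓝 0) :=
      h1.comp (tendsto_add_atTop_nat 1)
    refine h2.congr fun m => ?_
    exact tsum_congr fun n => by rw [show n + (m + 1) = m + 1 + n from by omega]
  -- bounds on |F1 - 1| and |F2|
  have hb1 : ∀ m, ‖(F z m).1 - 1‖ ≤ M * T m := by
    intro m
    have e0 := (hFeq z m).2.2.1
    have h1 : (F z m).1 - 1 = -(∑' n : ℕ, α (m + 1 + n) * cmvZeta (m + 1 + n) z *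
        (F z (m + 1 + n)).2) := by rw [e0]; ring
    rw [h1, norm_neg]
    calc ‖∑' n : ℕ, α (m + 1 + n) * cmvZeta (m + 1 + n) z * (F z (m + 1 + n)).2‖
        ≤ ∑' n : ℕ, ‖α (m + 1 + n) * cmvZeta (m + 1 + n) z * (F z (m + 1 + n)).2‖ := by
          have hnorm := norm_tsum_le_tsum_norm
            (f := fun n : ℕ => α (m + 1 + n) * cmvZeta (m + 1 + n) z * (F z (m + 1 + n)).2)
            (by exact (hFeq z m).1)
          exact hnorm
      _ ≤ ∑' n : ℕ, a (m + 1 + n) * M := by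
          refine Summable.tsum_le_tsum (fun n => ?_) (hFeq z m).1 ((hsum_tail m).mul_right M)
          rw [norm_mul, norm_mul, habsζ, mul_one]
          exact mul_le_mul_of_nonneg_left (hM2 _) (ha_nonneg _)
      _ = M * T m := by rw [tsum_mul_right]; ring
  have hb2 : ∀ m, ‖(F z m).2‖ ≤ M * T m := by
    intro m
    have e0 := (hFeq z m).2.2.2
    rw [e0, norm_neg]
    calc ‖∑' n : ℕ, z ^ n * conj (α (m + 1 + n)) * cmvZeta (m + 1) z *
          (F z (m + 1 + n)).1‖
        ≤ ∑' n : ℕ, ‖z ^ n * conj (α (m + 1 + n)) * cmvZeta (m + 1) z *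
          (F z (m + 1 + n)).1‖ := by
          have hnorm := norm_tsum_le_tsum_norm
            (f := fun n : ℕ => z ^ n * conj (α (m + 1 + n)) * cmvZeta (m + 1) z *
              (F z (m + 1 + n)).1)
            (by exact (hFeq z m).2.1)
          exact hnorm
      _ ≤ ∑' n : ℕ, a (m + 1 + n) * M := by
          refine Summable.tsum_le_tsum (fun n => ?_) (hFeq z m).2.1 ((hsum_tail m).mul_right M)
          rw [norm_mul, norm_mul, norm_mul, habsζ, mul_one, norm_pow, hz, one_pow, one_mul,
            Complex.norm_conj]
          exact mul_le_mul_of_nonneg_left (hM1 _) (ha_nonneg _)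
      _ = M * T m := by rw [tsum_mul_right]; ring
  -- D tends to 1
  have hDb : ∀ m, ‖D m - 1‖ ≤ 2 * M * T m := by
    intro m
    have h1 : D m - 1 = ((F z m).1 - 1) + (-(jostC α z m * (F z m).2)) := by
      show (F z m).1 - jostC α z m * (F z m).2 - 1 = _
      ring
    rw [h1]
    calc ‖((F z m).1 - 1) + (-(jostC α z m * (F z m).2))‖
        ≤ ‖(F z m).1 - 1‖ + ‖-(jostC α z m * (F z m).2)‖ :=
          norm_add_le _ _
      _ ≤ M * T m + M * T m := by
          have h2 : ‖-(jostC α z m * (F z m).2)‖ = ‖(F z m).2‖ := by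
            rw [norm_neg, norm_mul, habs_c, one_mul]
          rw [h2]
          exact add_le_add (hb1 m) (hb2 m)
      _ = 2 * M * T m := by ring
  have hDtend : Tendsto D atTop (𝓝 1) := by
    rw [tendsto_iff_norm_sub_tendsto_zero]
    have h0 : Tendsto (fun m => 2 * M * T m) atTop (𝓝 0) := by
      have := hT0.const_mul (2 * M)
      simpa using this
    refine squeeze_zero (fun m => norm_nonneg _) (fun m => ?_) h0
    exact hDb m
  have hDabs : Tendsto (fun m => ‖D m‖) atTop (𝓝 1) := by
    have := hDtend.norm
    simpa only [norm_one] using this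
  -- multipliability of the infinite product
  have hmult : Multipliable (fun n => (1 - a (n + 1) : ℝ)) := by
    have hpos : ∀ n : ℕ, (0 : ℝ) < 1 - a (n + 1) := fun n => by linarith [ha_lt n]
    have hsum1 : Summable (fun n => a (n + 1)) := (summable_nat_add_iff 1).2 hsum
    have hlog : Summable (fun n => Real.log (1 - a (n + 1))) := by
      refine Summable.of_norm_bounded_eventually_nat
        (hsum1.mul_left 2) ?_
      have hsmall : ∀ᶠ n in atTop, a (n + 1) < 1 / 2 :=
        hsum1.tendsto_atTop_zero.eventually (gt_mem_nhds (by norm_num))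
      filter_upwards [hsmall] with n hn
      have h0 : (0 : ℝ) ≤ a (n + 1) := ha_nonneg _
      have h1 : (0 : ℝ) < 1 - a (n + 1) := hpos n
      have hle : Real.log (1 - a (n + 1)) ≤ 0 :=
        Real.log_nonpos (by linarith) (by linarith)
      rw [Real.norm_eq_abs, abs_of_nonpos hle]
      have h2 : -Real.log (1 - a (n + 1)) = Real.log (1 - a (n + 1))⁻¹ :=
        (Real.log_inv _).symm
      rw [h2]
      have h3 : Real.log (1 - a (n + 1))⁻¹ ≤ (1 - a (n + 1))⁻¹ - 1 :=
        Real.log_le_sub_one_of_pos (by positivity)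
      have h4 : (1 - a (n + 1))⁻¹ ≤ 1 + 2 * a (n + 1) := by
        rw [inv_le_iff_one_le_mul₀ h1]
        nlinarith
      linarith
    exact Real.multipliable_of_summable_log hpos hlog
  have hP : Tendsto (fun m => ∏ j ∈ Finset.range m, (1 - a (j + 1))) atTop
      (𝓝 (∏' n : ℕ, (1 - a (n + 1)))) := hmult.hasProd.tendsto_prod_nat
  -- conclude
  have hlim : Tendsto (fun m => (∏ j ∈ Finset.range m, (1 - a (j + 1))) * ‖D m‖)
      atTop (𝓝 ((∏' n : ℕ, (1 - a (n + 1))) * 1)) := hP.mul hDabs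
  have hfinal : (∏' n : ℕ, (1 - a (n + 1))) * 1 ≤ ‖D 0‖ :=
    le_of_tendsto hlim (Filter.Eventually.of_forall hind)
  have hD0 : D 0 = (F z 0).1 - (F z 0).2 := by
    show (F z 0).1 - jostC α z 0 * (F z 0).2 = _
    simp [jostC]
  constructor
  · rw [mul_one] at hfinal
    rw [hD0] at hfinal
    exact hfinal
  · exact hαQ
end
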